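/- arXiv:2503.10243 — 3 statements merged into one kernel-verified Lean document; each statement's English description precedes it below -/
import Mathlib

section
/- For fixed u, v, w with w > 0, the kernel Φ(x,u,v,w) admits the representation Φ(x,u,v,w) = (8/π) ∫₀^∞ sin(yu)·cos(yv)·sin(xy)·K_{iy}(w) dy, where K_{iy}(w) = ∫₀^∞ e^{-w·cosh t}·cos(yt) dt. -/
open MeasureTheory Set Filter

noncomputable def K0 (w : ℝ) : ℝ := ∫ t in Ioi (0:ℝ), Real.exp (-w * Real.cosh t)

noncomputable def Phi (x u v w : ℝ) : ℝ :=
  Real.exp (-w * Real.cosh (x - u + v)) + Real.exp (-w * Real.cosh (x - u - v))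
    - Real.exp (-w * Real.cosh (x + u + v)) - Real.exp (-w * Real.cosh (x + u - v))

noncomputable def Kiy (y w : ℝ) : ℝ :=
  ∫ t in Ioi (0:ℝ), Real.exp (-w * Real.cosh t) * Real.cos (y * t)

noncomputable def polyconv (f g h : ℝ → ℝ) (x : ℝ) : ℝ :=
  (1 / (2 * Real.sqrt (2 * Real.pi))) *
    ∫ u in Ioi (0:ℝ), ∫ v in Ioi (0:ℝ), ∫ w in Ioi (0:ℝ),
      Phi x u v w * f u * g v * h w

noncomputable def Fs (f : ℝ → ℝ) (y : ℝ) : ℝ :=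
  Real.sqrt (2 / Real.pi) * ∫ x in Ioi (0:ℝ), Real.sin (x * y) * f x

noncomputable def Fc (f : ℝ → ℝ) (y : ℝ) : ℝ :=
  Real.sqrt (2 / Real.pi) * ∫ x in Ioi (0:ℝ), Real.cos (x * y) * f x

noncomputable def KLtr (h : ℝ → ℝ) (y : ℝ) : ℝ := ∫ w in Ioi (0:ℝ), Kiy y w * h w

noncomputable def watson (g0 h0 f : ℝ → ℝ) (x : ℝ) : ℝ :=
  polyconv f g0 h0 x - deriv (deriv (polyconv f g0 h0)) x

noncomputable def sconv (f φ : ℝ → ℝ) (x : ℝ) : ℝ :=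
  (1 / Real.sqrt (2 * Real.pi)) * ∫ u in Ioi (0:ℝ), f u * (φ |x - u| - φ (x + u))

noncomputable def coshMin (x u v : ℝ) : ℝ :=
  min (min (Real.cosh (x - u + v)) (Real.cosh (x - u - v)))
      (min (Real.cosh (x + u + v)) (Real.cosh (x + u - v)))


open FourierTransform
open scoped Real

namespace Stmt2Aux

lemma abs_le_cosh (t : ℝ) : |t| ≤ Real.cosh t := by
  rw [← Real.cosh_abs]
  have h1 : Real.sinh |t| ≤ Real.cosh |t| := by
    nlinarith [Real.cosh_sub_sinh |t|, Real.exp_pos (-|t|)]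
  rcases eq_or_lt_of_le (abs_nonneg t) with h | h
  · rw [← h]; simpa using Real.one_le_cosh 0
  · exact le_trans (Real.self_lt_sinh_iff.2 h).le h1

lemma abs_sinh_le_cosh (t : ℝ) : |Real.sinh t| ≤ Real.cosh t := by
  rw [Real.abs_sinh, ← Real.cosh_abs]
  nlinarith [Real.cosh_sub_sinh |t|, Real.exp_pos (-|t|)]

lemma sq_mul_exp_neg_le {a c : ℝ} (ha : 0 < a) (hc : 1 ≤ c) :
    c ^ 2 * Real.exp (-(a * c)) ≤ 27 / a ^ 3 := by
  have hc0 : (0:ℝ) < c := lt_of_lt_of_le one_pos hc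
  have h0 : a * c / 3 ≤ Real.exp (a * c / 3) := by
    nlinarith [Real.add_one_le_exp (a * c / 3)]
  have h3 : a ^ 3 * c ^ 3 / 27 ≤ Real.exp (a * c) := by
    have hp : (a * c / 3) ^ 3 ≤ (Real.exp (a * c / 3)) ^ 3 :=
      pow_le_pow_left₀ (by positivity) h0 3
    calc a ^ 3 * c ^ 3 / 27 = (a * c / 3) ^ 3 := by ring
      _ ≤ (Real.exp (a * c / 3)) ^ 3 := hp
      _ = Real.exp (a * c) := by
          rw [← Real.exp_nat_mul]; push_cast; ring_nf
  have hcc : c ^ 2 ≤ c ^ 3 := pow_le_pow_right₀ hc (by norm_num)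
  rw [Real.exp_neg, inv_eq_one_div, mul_one_div, div_le_div_iff₀ (Real.exp_pos _) (by positivity)]
  nlinarith [pow_pos ha 3, pow_pos hc0 2, pow_pos hc0 3]

lemma integrable_exp_abs {a : ℝ} (ha : 0 < a) :
    Integrable (fun t : ℝ => Real.exp (-(a * |t|))) := by
  have hIoi : IntegrableOn (fun t : ℝ => Real.exp (-(a * t))) (Ioi 0) := by
    simpa [neg_mul] using exp_neg_integrableOn_Ioi 0 ha
  have int_Ioi : IntegrableOn (fun x : ℝ => Real.exp (-(a * |x|))) (Ioi 0) :=
    hIoi.congr_fun (fun x hx => by rw [abs_of_pos hx]) measurableSet_Ioi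
  have int_Iic : IntegrableOn (fun x : ℝ => Real.exp (-(a * |x|))) (Iic 0) := by
    rw [← Measure.map_neg_eq_self (volume : Measure ℝ)]
    have m : MeasurableEmbedding fun x : ℝ => -x := (Homeomorph.neg ℝ).measurableEmbedding
    rw [m.integrableOn_map_iff]
    simp_rw [Function.comp_def, abs_neg, neg_preimage, neg_Iic, neg_zero]
    exact Iff.mpr integrableOn_Ici_iff_integrableOn_Ioi int_Ioi
  have := int_Iic.union int_Ioi
  rwa [Iic_union_Ioi, integrableOn_univ] at this


variable (w : ℝ)

noncomputable def g (t : ℝ) : ℝ := Real.exp (-w * Real.cosh t)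
noncomputable def g1 (t : ℝ) : ℝ := -w * Real.sinh t * g w t
noncomputable def g2 (t : ℝ) : ℝ := -w * Real.cosh t * g w t + -w * Real.sinh t * g1 w t

lemma g_pos (t : ℝ) : 0 < g w t := Real.exp_pos _

lemma g_cont : Continuous (g w) := by unfold g; fun_prop
lemma g1_cont : Continuous (g1 w) := by unfold g1 g; fun_prop
lemma g2_cont : Continuous (g2 w) := by unfold g2 g1 g; fun_prop

lemma hasDerivAt_g (t : ℝ) : HasDerivAt (g w) (g1 w t) t := by
  have h1 : HasDerivAt (fun t : ℝ => -w * Real.cosh t) (-w * Real.sinh t) t :=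
    (Real.hasDerivAt_cosh t).const_mul (-w)
  have h2 := h1.exp
  have h3 : g1 w t = Real.exp (-w * Real.cosh t) * (-w * Real.sinh t) := by rw [g1, g]; ring
  rw [h3]; exact h2

lemma hasDerivAt_g1 (t : ℝ) : HasDerivAt (g1 w) (g2 w t) t := by
  have h1 : HasDerivAt (fun t : ℝ => -w * Real.sinh t) (-w * Real.cosh t) t :=
    (Real.hasDerivAt_sinh t).const_mul (-w)
  have h2 := h1.mul (hasDerivAt_g w t)
  have h3 : g2 w t = -w * Real.cosh t * g w t + -w * Real.sinh t * g1 w t := rfl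
  rw [h3]; exact h2

lemma decay (hw : 0 < w) (t : ℝ) :
    Real.cosh t ^ 2 * g w t ≤ 27 / (w / 2) ^ 3 * Real.exp (-(w / 2 * |t|)) := by
  have h1 : g w t = Real.exp (-(w / 2 * Real.cosh t)) * Real.exp (-(w / 2 * Real.cosh t)) := by
    rw [← Real.exp_add, g]; ring_nf
  have h2 : Real.cosh t ^ 2 * Real.exp (-(w / 2 * Real.cosh t)) ≤ 27 / (w / 2) ^ 3 :=
    sq_mul_exp_neg_le (half_pos hw) (Real.one_le_cosh t)
  have h3 : Real.exp (-(w / 2 * Real.cosh t)) ≤ Real.exp (-(w / 2 * |t|)) := by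
    apply Real.exp_le_exp.2
    nlinarith [abs_le_cosh t, hw]
  calc Real.cosh t ^ 2 * g w t
      = Real.cosh t ^ 2 * Real.exp (-(w / 2 * Real.cosh t)) * Real.exp (-(w / 2 * Real.cosh t)) := by
        rw [h1]; ring
    _ ≤ 27 / (w / 2) ^ 3 * Real.exp (-(w / 2 * |t|)) := by
        apply mul_le_mul h2 h3 (Real.exp_pos _).le
        positivity

lemma integrable_g (hw : 0 < w) : Integrable (g w) := by
  apply Integrable.mono' ((integrable_exp_abs (half_pos hw)).const_mul (27 / (w / 2) ^ 3))
    (g_cont w).aestronglyMeasurable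
  refine ae_of_all _ fun t => ?_
  have h2 := decay w hw t
  have hgp := g_pos w t
  have h4 := Real.one_le_cosh t
  rw [Real.norm_eq_abs, abs_of_pos hgp]
  have h4' : 1 ≤ Real.cosh t ^ 2 := by nlinarith
  nlinarith [mul_le_mul_of_nonneg_right h4' hgp.le]

lemma integrable_g1 (hw : 0 < w) : Integrable (g1 w) := by
  apply Integrable.mono'
    (((integrable_exp_abs (half_pos hw)).const_mul (27 / (w / 2) ^ 3)).const_mul w)
    (g1_cont w).aestronglyMeasurable
  refine ae_of_all _ fun t => ?_
  have h2 := decay w hw t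
  have hgp := g_pos w t
  have h4 := Real.one_le_cosh t
  have h5 := abs_sinh_le_cosh t
  rw [Real.norm_eq_abs, g1, abs_mul, abs_mul, abs_neg, abs_of_pos hw, abs_of_pos hgp]
  have h4' : |Real.sinh t| ≤ Real.cosh t ^ 2 := by nlinarith
  have h6 : |Real.sinh t| * g w t ≤ Real.cosh t ^ 2 * g w t :=
    mul_le_mul_of_nonneg_right h4' hgp.le
  nlinarith

lemma integrable_g2 (hw : 0 < w) : Integrable (g2 w) := by
  apply Integrable.mono'
    (((integrable_exp_abs (half_pos hw)).const_mul (27 / (w / 2) ^ 3)).const_mul (w + w ^ 2))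
    (g2_cont w).aestronglyMeasurable
  refine ae_of_all _ fun t => ?_
  have h2 := decay w hw t
  have hgp := g_pos w t
  have h4 := Real.one_le_cosh t
  have h5 := abs_sinh_le_cosh t
  have habs : |g2 w t| ≤ (w + w ^ 2) * (Real.cosh t ^ 2 * g w t) := by
    have he : g2 w t = (-(w * Real.cosh t) + w ^ 2 * Real.sinh t ^ 2) * g w t := by
      rw [g2, g1]; ring
    rw [he, abs_mul, abs_of_pos hgp]
    have h7 : |(-(w * Real.cosh t) + w ^ 2 * Real.sinh t ^ 2)| ≤ (w + w ^ 2) * Real.cosh t ^ 2 := by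
      rw [abs_le]
      have hcc : Real.cosh t ≤ Real.cosh t ^ 2 := by nlinarith
      have hmm : w * Real.cosh t ≤ w * Real.cosh t ^ 2 := mul_le_mul_of_nonneg_left hcc hw.le
      constructor <;> nlinarith [Real.sinh_sq t, sq_nonneg (Real.cosh t), mul_pos hw hw, sq_nonneg (Real.sinh t)]
    nlinarith
  rw [Real.norm_eq_abs]
  nlinarith [abs_nonneg (g2 w t)]


noncomputable def gC (t : ℝ) : ℂ := (g w t : ℂ)
noncomputable def g1C (t : ℝ) : ℂ := (g1 w t : ℂ)
noncomputable def g2C (t : ℝ) : ℂ := (g2 w t : ℂ)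

lemma gC_cont : Continuous (gC w) := Complex.continuous_ofReal.comp (g_cont w)

lemma hasDerivAt_gC (t : ℝ) : HasDerivAt (gC w) (g1C w t) t := (hasDerivAt_g w t).ofReal_comp
lemma hasDerivAt_g1C (t : ℝ) : HasDerivAt (g1C w) (g2C w t) t := (hasDerivAt_g1 w t).ofReal_comp

lemma deriv_gC : deriv (gC w) = g1C w := funext fun t => (hasDerivAt_gC w t).deriv
lemma deriv_g1C : deriv (g1C w) = g2C w := funext fun t => (hasDerivAt_g1C w t).deriv

lemma integrable_gC (hw : 0 < w) : Integrable (gC w) := (integrable_g w hw).ofReal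
lemma integrable_g1C (hw : 0 < w) : Integrable (g1C w) := (integrable_g1 w hw).ofReal
lemma integrable_g2C (hw : 0 < w) : Integrable (g2C w) := (integrable_g2 w hw).ofReal

lemma fourier_g2C (hw : 0 < w) (ξ : ℝ) :
    𝓕 (g2C w) ξ = ((2 * (π:ℂ) * Complex.I * (ξ:ℂ)) ^ 2) • 𝓕 (gC w) ξ := by
  have d1 : 𝓕 (deriv (gC w)) = fun ξ : ℝ => (2 * (π:ℂ) * Complex.I * (ξ:ℂ)) • 𝓕 (gC w) ξ :=
    Real.fourier_deriv (integrable_gC w hw)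
      (fun t => (hasDerivAt_gC w t).differentiableAt)
      (by rw [deriv_gC]; exact integrable_g1C w hw)
  have d2 : 𝓕 (deriv (g1C w)) = fun ξ : ℝ => (2 * (π:ℂ) * Complex.I * (ξ:ℂ)) • 𝓕 (g1C w) ξ :=
    Real.fourier_deriv (integrable_g1C w hw)
      (fun t => (hasDerivAt_g1C w t).differentiableAt)
      (by rw [deriv_g1C]; exact integrable_g2C w hw)
  rw [deriv_gC] at d1
  rw [deriv_g1C] at d2
  calc 𝓕 (g2C w) ξ = (2 * (π:ℂ) * Complex.I * (ξ:ℂ)) • 𝓕 (g1C w) ξ := congrFun d2 ξ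
    _ = (2 * (π:ℂ) * Complex.I * (ξ:ℂ)) • ((2 * (π:ℂ) * Complex.I * (ξ:ℂ)) • 𝓕 (gC w) ξ) := by
        rw [d1]
    _ = ((2 * (π:ℂ) * Complex.I * (ξ:ℂ)) ^ 2) • 𝓕 (gC w) ξ := by rw [smul_smul, sq]

lemma fourier_cont (hw : 0 < w) : Continuous (𝓕 (gC w)) := by
  have h := Real.contDiff_fourier (f := gC w) (N := 0) ?_
  · exact h.continuous
  · intro n hn
    have hn0 : n = 0 := Nat.le_zero.mp (by exact_mod_cast hn)
    subst hn0
    simpa using (integrable_gC w hw).norm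

lemma norm_fourier_le (f : ℝ → ℂ) (ξ : ℝ) : ‖𝓕 f ξ‖ ≤ ∫ t : ℝ, ‖f t‖ :=
  VectorFourier.norm_fourierIntegral_le_integral_norm _ _ _ _ _

lemma fourier_bound (hw : 0 < w) (ξ : ℝ) :
    ‖𝓕 (gC w) ξ‖ ≤ ((∫ t : ℝ, ‖gC w t‖) + ∫ t : ℝ, ‖g2C w t‖) * (1 + ξ ^ 2)⁻¹ := by
  set A := ∫ t : ℝ, ‖gC w t‖ with hA
  set B := ∫ t : ℝ, ‖g2C w t‖ with hB
  have h1 : ‖𝓕 (gC w) ξ‖ ≤ A := norm_fourier_le _ _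
  have h2 : ‖𝓕 (g2C w) ξ‖ ≤ B := norm_fourier_le _ _
  have h3 : ‖𝓕 (g2C w) ξ‖ = (2 * π * ξ) ^ 2 * ‖𝓕 (gC w) ξ‖ := by
    rw [fourier_g2C w hw, norm_smul, norm_pow]
    have hn : ‖(2 * (π:ℂ) * Complex.I * (ξ:ℂ))‖ = 2 * π * |ξ| := by
      simp [norm_mul, Complex.norm_I, Complex.norm_real, Real.norm_eq_abs,
        abs_of_pos Real.pi_pos]
    rw [hn]
    have h5 : (2 * π * |ξ|) ^ 2 = (2 * π * ξ) ^ 2 := by rw [mul_pow, mul_pow, sq_abs]; ring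
    rw [h5]
  have hπ := Real.pi_gt_three
  have hnn := norm_nonneg (𝓕 (gC w) ξ)
  have h4 : ξ ^ 2 * ‖𝓕 (gC w) ξ‖ ≤ B := by
    have hX : (0:ℝ) ≤ ξ ^ 2 * ‖𝓕 (gC w) ξ‖ := mul_nonneg (sq_nonneg ξ) hnn
    have h16 : (1:ℝ) ≤ 4 * π ^ 2 := by nlinarith
    have h17 := mul_le_mul_of_nonneg_right h16 hX
    nlinarith [h17, h2, h3]
  have hpos : (0:ℝ) < 1 + ξ ^ 2 := by positivity
  have hgoal : ‖𝓕 (gC w) ξ‖ * (1 + ξ ^ 2) ≤ A + B := by nlinarith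
  calc ‖𝓕 (gC w) ξ‖ = ‖𝓕 (gC w) ξ‖ * (1 + ξ ^ 2) * (1 + ξ ^ 2)⁻¹ := by field_simp
    _ ≤ (A + B) * (1 + ξ ^ 2)⁻¹ := mul_le_mul_of_nonneg_right hgoal (by positivity)

lemma fourier_integrable (hw : 0 < w) : Integrable (𝓕 (gC w)) := by
  apply Integrable.mono' (integrable_inv_one_add_sq.const_mul
      ((∫ t : ℝ, ‖gC w t‖) + ∫ t : ℝ, ‖g2C w t‖))
    (fourier_cont w hw).aestronglyMeasurable
  exact ae_of_all _ (fourier_bound w hw)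


lemma integrable_cos_g (hw : 0 < w) (c : ℝ) :
    Integrable (fun v : ℝ => Real.cos (c * v) * g w v) := by
  apply Integrable.mono' (integrable_g w hw)
    (((Real.continuous_cos.comp (continuous_const.mul continuous_id)).mul
      (g_cont w)).aestronglyMeasurable)
  refine ae_of_all _ fun v => ?_
  show ‖Real.cos (c * v) * g w v‖ ≤ g w v
  rw [Real.norm_eq_abs, abs_mul, abs_of_pos (g_pos w v)]
  exact mul_le_of_le_one_left (g_pos w v).le (abs_le.mpr ⟨(Real.neg_one_le_cos _), Real.cos_le_one _⟩)

lemma integrable_neg_sin_g (hw : 0 < w) (c : ℝ) :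
    Integrable (fun v : ℝ => -Real.sin (c * v) * g w v) := by
  apply Integrable.mono' (integrable_g w hw)
    ((((Real.continuous_sin.comp (continuous_const.mul continuous_id)).neg).mul
      (g_cont w)).aestronglyMeasurable)
  refine ae_of_all _ fun v => ?_
  show ‖-Real.sin (c * v) * g w v‖ ≤ g w v
  rw [Real.norm_eq_abs, abs_mul, abs_of_pos (g_pos w v), abs_neg]
  exact mul_le_of_le_one_left (g_pos w v).le (abs_le.mpr ⟨(Real.neg_one_le_sin _), Real.sin_le_one _⟩)

lemma odd_zero (F : ℝ → ℝ) (hodd : ∀ v, F (-v) = -F v) : ∫ v : ℝ, F v = 0 := by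
  have h : ∫ v : ℝ, F (-v) = ∫ v : ℝ, F v := integral_neg_eq_self F volume
  simp_rw [hodd] at h
  rw [integral_neg] at h
  linarith

lemma fourier_g_eq (hw : 0 < w) (ξ : ℝ) :
    𝓕 (gC w) ξ = ((2 * Kiy (2 * π * ξ) w : ℝ) : ℂ) := by
  rw [Real.fourier_real_eq_integral_exp_smul]
  have hpt : ∀ v : ℝ, Complex.exp (((-2 * π * v * ξ : ℝ) : ℂ) * Complex.I) • gC w v
      = ((Real.cos (2 * π * ξ * v) * g w v : ℝ) : ℂ)
        + ((-Real.sin (2 * π * ξ * v) * g w v : ℝ) : ℂ) • Complex.I := by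
    intro v
    have h1 : Real.cos (-2 * π * v * ξ) = Real.cos (2 * π * ξ * v) := by
      rw [show (-2 * π * v * ξ) = -(2 * π * ξ * v) by ring, Real.cos_neg]
    have h2 : Real.sin (-2 * π * v * ξ) = -Real.sin (2 * π * ξ * v) := by
      rw [show (-2 * π * v * ξ) = -(2 * π * ξ * v) by ring, Real.sin_neg]
    rw [Complex.exp_mul_I, ← Complex.ofReal_cos, ← Complex.ofReal_sin, h1, h2]
    simp only [gC, smul_eq_mul]
    push_cast
    ring
  simp only [hpt]
  have hInt1 : Integrable (fun v : ℝ => ((Real.cos (2 * π * ξ * v) * g w v : ℝ) : ℂ)) :=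
    (integrable_cos_g w hw (2 * π * ξ)).ofReal
  have hInt2 : Integrable (fun v : ℝ => ((-Real.sin (2 * π * ξ * v) * g w v : ℝ) : ℂ)) :=
    (integrable_neg_sin_g w hw (2 * π * ξ)).ofReal
  rw [integral_add hInt1 (hInt2.smul_const Complex.I)]
  have e1 : (∫ a : ℝ, ((Real.cos (2 * π * ξ * a) * g w a : ℝ) : ℂ))
      = (((∫ a : ℝ, Real.cos (2 * π * ξ * a) * g w a) : ℝ) : ℂ) := integral_ofReal
  have e2 : (∫ a : ℝ, ((-Real.sin (2 * π * ξ * a) * g w a : ℝ) : ℂ))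
      = (((∫ a : ℝ, -Real.sin (2 * π * ξ * a) * g w a) : ℝ) : ℂ) := integral_ofReal
  rw [integral_smul_const, e1, e2]
  have hodd : ∫ v : ℝ, -Real.sin (2 * π * ξ * v) * g w v = 0 := by
    apply odd_zero
    intro v
    simp only [g, mul_neg, Real.sin_neg, Real.cosh_neg]
    ring
  rw [hodd]
  simp only [Complex.ofReal_zero, zero_smul, add_zero]
  norm_cast
  have h2K : ∫ v : ℝ, Real.cos (2 * π * ξ * v) * g w v
      = 2 * ∫ v in Ioi (0:ℝ), Real.cos (2 * π * ξ * v) * g w v := by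
    rw [← integral_comp_abs (f := fun x => Real.cos (2 * π * ξ * x) * g w x)]
    refine integral_congr_ae (Eventually.of_forall fun v => ?_)
    show Real.cos (2 * π * ξ * v) * g w v = Real.cos (2 * π * ξ * |v|) * g w |v|
    rcases abs_choice v with h | h
    · rw [h]
    · rw [h]
      simp only [g, mul_neg, Real.cos_neg, Real.cosh_neg]
  rw [h2K, Kiy]
  congr 1
  refine setIntegral_congr_fun measurableSet_Ioi fun t ht => ?_
  simp only [g]
  ring


lemma Kiy_neg (y : ℝ) : Kiy (-y) w = Kiy y w := by
  simp only [Kiy, neg_mul, Real.cos_neg]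

lemma Kiy_eq_fourier (hw : 0 < w) (y : ℝ) :
    Kiy y w = (𝓕 (gC w) (y * (2 * π)⁻¹)).re / 2 := by
  rw [fourier_g_eq w hw]
  have h : 2 * π * (y * (2 * π)⁻¹) = y := by
    field_simp
  rw [h, Complex.ofReal_re]
  ring

lemma Kiy_cont (hw : 0 < w) : Continuous (fun y => Kiy y w) := by
  have h : (fun y => Kiy y w) = fun y => (𝓕 (gC w) (y * (2 * π)⁻¹)).re / 2 :=
    funext fun y => Kiy_eq_fourier w hw y
  rw [h]
  exact (Complex.continuous_re.comp ((fourier_cont w hw).comp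
    (continuous_id.mul continuous_const))).div_const 2

lemma Kiy_integrable (hw : 0 < w) : Integrable (fun y => Kiy y w) := by
  have h1 : Integrable (fun y : ℝ => 𝓕 (gC w) (y * (2 * π)⁻¹)) :=
    (fourier_integrable w hw).comp_mul_right' (by positivity)
  have h2 : Integrable (fun y : ℝ => (𝓕 (gC w) (y * (2 * π)⁻¹)).re / 2) := h1.re.div_const 2
  exact h2.congr (Eventually.of_forall fun y => (Kiy_eq_fourier w hw y).symm)

lemma K2_integrable (hw : 0 < w) : Integrable (fun v : ℝ => 2 * Kiy (2 * π * v) w) := by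
  have h1 : Integrable (fun v : ℝ => Kiy (2 * π * v) w) := by
    have := (Kiy_integrable w hw).comp_mul_left' (R := 2 * π) (by positivity)
    exact this
  exact h1.const_mul 2

lemma K2_cont (hw : 0 < w) : Continuous (fun v : ℝ => 2 * Kiy (2 * π * v) w) :=
  continuous_const.mul ((Kiy_cont w hw).comp (continuous_const.mul continuous_id))

lemma key (hw : 0 < w) (t : ℝ) :
    ∫ y in Ioi (0:ℝ), Kiy y w * Real.cos (y * t) = π / 2 * Real.exp (-w * Real.cosh t) := by
  have hinv : 𝓕⁻ (𝓕 (gC w)) t = gC w t :=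
    (integrable_gC w hw).fourierInv_fourier_eq (fourier_integrable w hw) (gC_cont w).continuousAt
  rw [Real.fourierInv_eq_fourier_neg,
      Real.fourier_real_eq_integral_exp_smul] at hinv
  have hre : ∀ v : ℝ, Complex.exp (((-2 * π * v * -t : ℝ) : ℂ) * Complex.I) • 𝓕 (gC w) v
      = ((Real.cos (2 * π * t * v) * (2 * Kiy (2 * π * v) w) : ℝ) : ℂ)
        + ((Real.sin (2 * π * t * v) * (2 * Kiy (2 * π * v) w) : ℝ) : ℂ) • Complex.I := by
    intro v
    rw [fourier_g_eq w hw v]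
    have h1 : Real.cos (-2 * π * v * -t) = Real.cos (2 * π * t * v) := by
      rw [show (-2 * π * v * -t) = 2 * π * t * v by ring]
    have h2 : Real.sin (-2 * π * v * -t) = Real.sin (2 * π * t * v) := by
      rw [show (-2 * π * v * -t) = 2 * π * t * v by ring]
    rw [Complex.exp_mul_I, ← Complex.ofReal_cos, ← Complex.ofReal_sin, h1, h2]
    simp only [smul_eq_mul]
    push_cast
    ring
  simp only [hre] at hinv
  have hcos : Integrable (fun v : ℝ => Real.cos (2 * π * t * v) * (2 * Kiy (2 * π * v) w)) := by
    apply Integrable.mono' (K2_integrable w hw).abs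
      (((Real.continuous_cos.comp (continuous_const.mul continuous_id)).mul
        (K2_cont w hw)).aestronglyMeasurable)
    refine ae_of_all _ fun v => ?_
    show ‖Real.cos (2 * π * t * v) * (2 * Kiy (2 * π * v) w)‖ ≤ |2 * Kiy (2 * π * v) w|
    rw [Real.norm_eq_abs, abs_mul]
    exact mul_le_of_le_one_left (abs_nonneg _)
      (abs_le.mpr ⟨Real.neg_one_le_cos _, Real.cos_le_one _⟩)
  have hsin : Integrable (fun v : ℝ => Real.sin (2 * π * t * v) * (2 * Kiy (2 * π * v) w)) := by
    apply Integrable.mono' (K2_integrable w hw).abs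
      (((Real.continuous_sin.comp (continuous_const.mul continuous_id)).mul
        (K2_cont w hw)).aestronglyMeasurable)
    refine ae_of_all _ fun v => ?_
    show ‖Real.sin (2 * π * t * v) * (2 * Kiy (2 * π * v) w)‖ ≤ |2 * Kiy (2 * π * v) w|
    rw [Real.norm_eq_abs, abs_mul]
    exact mul_le_of_le_one_left (abs_nonneg _)
      (abs_le.mpr ⟨Real.neg_one_le_sin _, Real.sin_le_one _⟩)
  have hA : Integrable (fun v : ℝ => ((Real.cos (2 * π * t * v) * (2 * Kiy (2 * π * v) w) : ℝ) : ℂ)) :=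
    hcos.ofReal
  have hB : Integrable (fun v : ℝ => ((Real.sin (2 * π * t * v) * (2 * Kiy (2 * π * v) w) : ℝ) : ℂ)) :=
    hsin.ofReal
  have eA : (∫ v : ℝ, ((Real.cos (2 * π * t * v) * (2 * Kiy (2 * π * v) w) : ℝ) : ℂ))
      = (((∫ v : ℝ, Real.cos (2 * π * t * v) * (2 * Kiy (2 * π * v) w)) : ℝ) : ℂ) := integral_ofReal
  have eB : (∫ v : ℝ, ((Real.sin (2 * π * t * v) * (2 * Kiy (2 * π * v) w) : ℝ) : ℂ))
      = (((∫ v : ℝ, Real.sin (2 * π * t * v) * (2 * Kiy (2 * π * v) w)) : ℝ) : ℂ) := integral_ofReal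
  have hzero : ∫ v : ℝ, Real.sin (2 * π * t * v) * (2 * Kiy (2 * π * v) w) = 0 := by
    apply odd_zero
    intro v
    rw [show 2 * π * -v = -(2 * π * v) by ring, Kiy_neg,
      show 2 * π * t * -v = -(2 * π * t * v) by ring, Real.sin_neg]
    ring
  rw [integral_add hA (hB.smul_const Complex.I), integral_smul_const, eA, eB, hzero] at hinv
  simp only [Complex.ofReal_zero, zero_smul, add_zero] at hinv
  have hXg : ∫ v : ℝ, Real.cos (2 * π * t * v) * (2 * Kiy (2 * π * v) w) = g w t :=
    Complex.ofReal_inj.mp hinv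
  -- even reduction
  have h2I : ∫ v : ℝ, Real.cos (2 * π * t * v) * (2 * Kiy (2 * π * v) w)
      = 2 * ∫ v in Ioi (0:ℝ), Real.cos (2 * π * t * v) * (2 * Kiy (2 * π * v) w) := by
    rw [← integral_comp_abs (f := fun x => Real.cos (2 * π * t * x) * (2 * Kiy (2 * π * x) w))]
    refine integral_congr_ae (Eventually.of_forall fun v => ?_)
    show Real.cos (2 * π * t * v) * (2 * Kiy (2 * π * v) w)
        = Real.cos (2 * π * t * |v|) * (2 * Kiy (2 * π * |v|) w)
    rcases abs_choice v with h | h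
    · rw [h]
    · rw [h, show 2 * π * -v = -(2 * π * v) by ring, Kiy_neg,
        show 2 * π * t * -v = -(2 * π * t * v) by ring, Real.cos_neg]
  -- substitution y = 2 π v
  set G : ℝ → ℝ := fun y => Real.cos (t * y) * (2 * Kiy y w) with hG
  have hsub : ∫ v in Ioi (0:ℝ), Real.cos (2 * π * t * v) * (2 * Kiy (2 * π * v) w)
      = (2 * π)⁻¹ * ∫ y in Ioi (0:ℝ), G y := by
    have h1 : ∀ v : ℝ, Real.cos (2 * π * t * v) * (2 * Kiy (2 * π * v) w) = G (2 * π * v) := by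
      intro v
      rw [hG]
      simp only []
      rw [show t * (2 * π * v) = 2 * π * t * v by ring]
    rw [setIntegral_congr_fun measurableSet_Ioi (fun v _ => h1 v)]
    have h2 := integral_comp_mul_left_Ioi G 0 (b := 2 * π) (by positivity)
    rw [mul_zero] at h2
    rw [h2, smul_eq_mul]
  have hGS : ∫ y in Ioi (0:ℝ), G y = 2 * ∫ y in Ioi (0:ℝ), Kiy y w * Real.cos (y * t) := by
    rw [← integral_const_mul]
    refine setIntegral_congr_fun measurableSet_Ioi fun y _ => ?_
    rw [hG]
    simp only []
    rw [mul_comm t y]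
    ring
  have hpi := Real.pi_pos
  have hfinal := hXg
  rw [h2I, hsub, hGS] at hfinal
  have : g w t = Real.exp (-w * Real.cosh t) := rfl
  rw [this] at hfinal
  field_simp at hfinal
  rw [neg_mul]
  linarith
lemma term_integrable (hw : 0 < w) (T : ℝ) :
    IntegrableOn (fun y => Kiy y w * Real.cos (y * T)) (Ioi (0:ℝ)) := by
  apply Integrable.mono' ((Kiy_integrable w hw).abs.integrableOn)
    (((Kiy_cont w hw).mul (Real.continuous_cos.comp
      (continuous_id.mul continuous_const))).aestronglyMeasurable.restrict)
  refine ae_of_all _ fun y => ?_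
  show ‖Kiy y w * Real.cos (y * T)‖ ≤ |Kiy y w|
  rw [Real.norm_eq_abs, abs_mul]
  exact mul_le_of_le_one_right (abs_nonneg _)
    (abs_le.mpr ⟨Real.neg_one_le_cos _, Real.cos_le_one _⟩)

end Stmt2Aux


theorem stmt2 (u v w x : ℝ) (hw : 0 < w) :
    Phi x u v w = (8 / Real.pi) *
      ∫ y in Ioi (0:ℝ), Real.sin (y * u) * Real.cos (y * v) * Real.sin (x * y) * Kiy y w := by
  have hpt : ∀ y : ℝ, Real.sin (y * u) * Real.cos (y * v) * Real.sin (x * y) * Kiy y w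
      = (Kiy y w * Real.cos (y * (x - u + v)) + Kiy y w * Real.cos (y * (x - u - v))
         - Kiy y w * Real.cos (y * (x + u + v)) - Kiy y w * Real.cos (y * (x + u - v))) / 4 := by
    intro y
    have e1 : y * (x - u + v) = x * y - y * u + y * v := by ring
    have e2 : y * (x - u - v) = x * y - y * u - y * v := by ring
    have e3 : y * (x + u + v) = x * y + y * u + y * v := by ring
    have e4 : y * (x + u - v) = x * y + y * u - y * v := by ring
    rw [e1, e2, e3, e4]
    simp only [Real.cos_add, Real.cos_sub, Real.sin_add, Real.sin_sub]
    ring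
  rw [setIntegral_congr_fun measurableSet_Ioi (fun y _ => hpt y)]
  have h1 := Stmt2Aux.term_integrable w hw (x - u + v)
  have h2 := Stmt2Aux.term_integrable w hw (x - u - v)
  have h3 := Stmt2Aux.term_integrable w hw (x + u + v)
  have h4 := Stmt2Aux.term_integrable w hw (x + u - v)
  have h12 : IntegrableOn (fun y => Kiy y w * Real.cos (y * (x - u + v))
      + Kiy y w * Real.cos (y * (x - u - v))) (Ioi (0:ℝ)) := h1.add h2
  have h123 : IntegrableOn (fun y => Kiy y w * Real.cos (y * (x - u + v))
      + Kiy y w * Real.cos (y * (x - u - v))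
      - Kiy y w * Real.cos (y * (x + u + v))) (Ioi (0:ℝ)) := h12.sub h3
  rw [integral_div, integral_sub h123 h4, integral_sub h12 h3, integral_add h1 h2]
  rw [Stmt2Aux.key w hw (x - u + v), Stmt2Aux.key w hw (x - u - v),
    Stmt2Aux.key w hw (x + u + v), Stmt2Aux.key w hw (x + u - v)]
  rw [Phi]
  have hπ := Real.pi_pos
  field_simp
  ring
end

section
/- If f, g ∈ L¹(ℝ₊) and h ∈ L₁^{0,β}(ℝ₊) with β ∈ (0,1), then the polyconvolution P(f,g,h) is a bounded continuous function on ℝ₊ vanishing at infinity, i.e. P(f,g,h) ∈ C₀(ℝ₊). -/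
open MeasureTheory Set Filter

lemma kernel_integrable {c : ℝ} (hc : 0 < c) :
    IntegrableOn (fun t => Real.exp (-c * Real.cosh t)) (Ioi 0) := by
  apply (exp_neg_integrableOn_Ioi 0 hc).mono'
  · exact (Real.continuous_exp.comp (continuous_const.mul Real.continuous_cosh)).aestronglyMeasurable
  · filter_upwards [ae_restrict_mem measurableSet_Ioi] with t ht
    rw [Real.norm_eq_abs, abs_of_pos (Real.exp_pos _), Real.exp_le_exp]
    have h1 : t < Real.sinh t := Real.self_lt_sinh_iff.mpr ht
    have h2 : Real.sinh t < Real.cosh t := by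
      rw [Real.sinh_eq, Real.cosh_eq]
      have := Real.exp_pos (-t); linarith
    nlinarith

lemma K0_lower {β : ℝ} (hβ : β ∈ Ioo (0:ℝ) 1) :
    ∃ ε > 0, ∀ w ∈ Ioi (0:ℝ), ε * Real.exp (-w) ≤ K0 (β * w) := by
  have h1β : (1:ℝ) < 1/β := (one_lt_div hβ.1).mpr hβ.2
  have hev : ∀ᶠ t in nhds (0:ℝ), Real.cosh t < 1/β := by
    have hca : ContinuousAt Real.cosh 0 := Real.continuous_cosh.continuousAt
    have : Real.cosh 0 < 1/β := by rwa [Real.cosh_zero]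
    exact hca.eventually_lt continuousAt_const this
  obtain ⟨δ, hδ, hball⟩ := Metric.eventually_nhds_iff.mp hev
  refine ⟨δ/2, by positivity, fun w hw => ?_⟩
  have hwpos : (0:ℝ) < w := hw
  have hbw : 0 < β * w := mul_pos hβ.1 hwpos
  have hInt := kernel_integrable hbw
  have hsub : Ioc (0:ℝ) (δ/2) ⊆ Ioi 0 := fun t ht => ht.1
  have hcoshδ : ∀ t ∈ Ioc (0:ℝ) (δ/2), Real.cosh t < 1/β := by
    intro t ht
    apply hball
    rw [Real.dist_eq, sub_zero, abs_of_pos ht.1]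
    linarith [ht.2]
  have step2 : (δ/2) * Real.exp (-w) ≤ ∫ t in Ioc (0:ℝ) (δ/2), Real.exp (-(β*w) * Real.cosh t) := by
    have hconst : ∫ t in Ioc (0:ℝ) (δ/2), Real.exp (-w) = (δ/2) * Real.exp (-w) := by
      rw [setIntegral_const, Real.volume_real_Ioc_of_le (by linarith)]
      rw [smul_eq_mul]; ring
    rw [← hconst]
    apply setIntegral_mono_on
    · exact integrableOn_const (by rw [Real.volume_Ioc]; exact ENNReal.ofReal_ne_top)
    · exact hInt.mono_set hsub
    · exact measurableSet_Ioc
    · intro t ht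
      rw [Real.exp_le_exp]
      have h1 : Real.cosh t < 1/β := hcoshδ t ht
      have h2 : 0 < Real.cosh t := Real.cosh_pos t
      rw [neg_mul, neg_le_neg_iff]
      rw [div_eq_mul_inv] at h1
      have h3 := mul_le_mul_of_nonneg_left (le_of_lt h1) (le_of_lt hbw)
      have h4 : β * β⁻¹ = 1 := mul_inv_cancel₀ (ne_of_gt hβ.1)
      nlinarith
  have step1 : ∫ t in Ioc (0:ℝ) (δ/2), Real.exp (-(β*w) * Real.cosh t) ≤ K0 (β * w) := by
    unfold K0
    apply setIntegral_mono_set hInt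
    · filter_upwards with t using le_of_lt (Real.exp_pos _)
    · exact HasSubset.Subset.eventuallyLE hsub
  linarith

lemma Phi_abs_le (x u v w : ℝ) (hw : 0 ≤ w) : |Phi x u v w| ≤ 4 * Real.exp (-w) := by
  have key : ∀ a : ℝ, Real.exp (-w * Real.cosh a) ≤ Real.exp (-w) := fun a => by
    rw [Real.exp_le_exp]
    have h1 := Real.one_le_cosh a
    nlinarith
  have p : ∀ a : ℝ, 0 < Real.exp (-w * Real.cosh a) := fun a => Real.exp_pos _
  rw [Phi, abs_le]
  constructor
  · nlinarith [key (x-u+v), key (x-u-v), key (x+u+v), key (x+u-v),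
      p (x-u+v), p (x-u-v), p (x+u+v), p (x+u-v), Real.exp_pos (-w)]
  · nlinarith [key (x-u+v), key (x-u-v), key (x+u+v), key (x+u-v),
      p (x-u+v), p (x-u-v), p (x+u+v), p (x+u-v), Real.exp_pos (-w)]

lemma Phi_tendsto (u v w : ℝ) (hw : 0 < w) :
    Tendsto (fun x => Phi x u v w) atTop (nhds 0) := by
  have key : ∀ a : ℝ, Tendsto (fun x : ℝ => Real.exp (-w * Real.cosh (x + a))) atTop (nhds 0) := by
    intro a
    apply Real.tendsto_exp_atBot.comp
    have hle : ∀ y : ℝ, y ≤ Real.cosh y := by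
      intro y
      rcases le_or_gt y 0 with hy | hy
      · linarith [Real.one_le_cosh y]
      · have h1 : y < Real.sinh y := Real.self_lt_sinh_iff.mpr hy
        have h2 : Real.sinh y < Real.cosh y := by
          rw [Real.sinh_eq, Real.cosh_eq]
          have := Real.exp_pos (-y); linarith
        linarith
    have h1 : Tendsto (fun x : ℝ => Real.cosh (x + a)) atTop atTop := by
      apply tendsto_atTop_mono (fun x => hle (x + a))
      exact tendsto_atTop_add_const_right _ a tendsto_id
    have h2 : Tendsto (fun x : ℝ => w * Real.cosh (x + a)) atTop atTop :=
      h1.const_mul_atTop hw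
    exact (tendsto_neg_atBot_iff.mpr h2).congr fun x => by ring
  have H := ((( key (v - u)).add (key (-u - v))).sub (key (u + v))).sub (key (u - v))
  norm_num at H
  refine H.congr fun x => ?_
  rw [Phi]
  have e1 : x + (v - u) = x - u + v := by ring
  have e2 : x + (-u - v) = x - u - v := by ring
  have e3 : x + (u + v) = x + u + v := by ring
  have e4 : x + (u - v) = x + u - v := by ring
  rw [e1, e2, e3, e4]; ring_nf

lemma Phi_zero_null {x u v : ℝ} (hx : 0 < x) (hu : 0 < u) (hv : 0 < v) :
    MeasureTheory.volume {w : ℝ | Phi x u v w = 0} = 0 := by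
  set c1 := Real.cosh (x - u + v) with hc1
  set c2 := Real.cosh (x - u - v) with hc2
  set c3 := Real.cosh (x + u + v) with hc3
  set c4 := Real.cosh (x + u - v) with hc4
  have habs : |x - u + v| < x + u + v := abs_lt.mpr ⟨by linarith, by linarith⟩
  have habs2 : |x - u - v| < x + u + v := abs_lt.mpr ⟨by linarith, by linarith⟩
  have habs4 : |x + u - v| < x + u + v := abs_lt.mpr ⟨by linarith, by linarith⟩
  have h3pos : (0:ℝ) < x + u + v := by linarith
  have h13 : c1 < c3 := by
    rw [hc1, hc3, Real.cosh_lt_cosh, abs_of_pos h3pos]; exact habs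
  have h23 : c2 < c3 := by
    rw [hc2, hc3, Real.cosh_lt_cosh, abs_of_pos h3pos]; exact habs2
  have h43 : c4 < c3 := by
    rw [hc4, hc3, Real.cosh_lt_cosh, abs_of_pos h3pos]; exact habs4
  have hP : AnalyticOnNhd ℝ (fun w => Phi x u v w) univ := by
    intro w _
    unfold Phi
    have hA : ∀ c : ℝ, AnalyticAt ℝ (fun w : ℝ => Real.exp (-w * c)) w := fun c =>
      ((analyticAt_id.neg.mul analyticAt_const)).rexp
    exact (((hA c1).add (hA c2)).sub (hA c3)).sub (hA c4)
  have hne : ¬ EqOn (fun w => Phi x u v w) 0 univ := by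
    intro hE
    have hterm : ∀ c : ℝ, c < c3 →
        Tendsto (fun w : ℝ => Real.exp (-w * c) * Real.exp (c3 * w)) atBot (nhds 0) := by
      intro c hc
      have heq : ∀ w : ℝ, Real.exp (-w * c) * Real.exp (c3 * w) = Real.exp ((c3 - c) * w) := by
        intro w; rw [← Real.exp_add]; ring_nf
      have h1 : Tendsto (fun w : ℝ => (c3 - c) * w) atBot atBot := by
        apply Tendsto.const_mul_atBot (by linarith)
        exact tendsto_id
      exact (Real.tendsto_exp_atBot.comp h1).congr fun w => (heq w).symm
    have hc3t : Tendsto (fun w : ℝ => Real.exp (-w * c3) * Real.exp (c3 * w)) atBot (nhds 1) := by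
      have : ∀ w : ℝ, Real.exp (-w * c3) * Real.exp (c3 * w) = 1 := by
        intro w; rw [← Real.exp_add]; ring_nf; exact Real.exp_zero
      rw [funext this]; exact tendsto_const_nhds
    have hQ : Tendsto (fun w : ℝ => Phi x u v w * Real.exp (c3 * w)) atBot (nhds (-1)) := by
      have H := (((hterm c1 h13).add (hterm c2 h23)).sub hc3t).sub (hterm c4 h43)
      norm_num at H
      refine H.congr fun w => ?_
      rw [Phi, ← hc1, ← hc2, ← hc3, ← hc4]; ring
    have hQ0 : Tendsto (fun w : ℝ => Phi x u v w * Real.exp (c3 * w)) atBot (nhds 0) := by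
      have : (fun w : ℝ => Phi x u v w * Real.exp (c3 * w)) = fun _ => (0:ℝ) := by
        funext w
        have h0 := hE (mem_univ w)
        simp only [show Phi x u v w = 0 from h0, zero_mul]
      rw [this]; exact tendsto_const_nhds
    have := tendsto_nhds_unique hQ hQ0
    norm_num at this
  rcases hP.eqOn_zero_or_eventually_ne_zero_of_preconnected isPreconnected_univ with hE | hcod
  · exact absurd hE hne
  · have hmem : {w : ℝ | Phi x u v w ≠ 0} ∈ Filter.codiscrete ℝ := hcod
    obtain ⟨-, hdisc⟩ := mem_codiscrete'.mp hmem
    have hcount : Set.Countable ({w : ℝ | Phi x u v w ≠ 0}ᶜ) := by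
      haveI := isDiscrete_iff_discreteTopology.mp hdisc
      have : Countable ↥({w : ℝ | Phi x u v w ≠ 0}ᶜ) :=
        TopologicalSpace.separableSpace_iff_countable.mp inferInstance
      exact Set.countable_coe_iff.mp this
    have hsub : {w : ℝ | Phi x u v w = 0} ⊆ {w : ℝ | Phi x u v w ≠ 0}ᶜ := fun w hw => by
      simpa using hw
    exact measure_mono_null hsub (hcount.measure_zero volume)

lemma bad_case (f g h : ℝ → ℝ)
    (hmeas : ¬ AEStronglyMeasurable h ((volume : Measure ℝ).restrict (Ioi (0:ℝ)))) :
    ∀ x ∈ Ioi (0:ℝ), (1 / (2 * Real.sqrt (2 * Real.pi))) *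
      (∫ u in Ioi (0:ℝ), ∫ v in Ioi (0:ℝ), ∫ w in Ioi (0:ℝ),
        Phi x u v w * f u * g v * h w) = 0 := by
  intro x hx
  have inner0 : ∀ u ∈ Ioi (0:ℝ), ∀ v ∈ Ioi (0:ℝ),
      (∫ w in Ioi (0:ℝ), Phi x u v w * f u * g v * h w) = 0 := by
    intro u hu v hv
    by_cases hfg : f u * g v = 0
    · have hz : ∀ w, Phi x u v w * f u * g v * h w = 0 := by
        intro w
        rcases mul_eq_zero.mp hfg with h0 | h0 <;> simp [h0, mul_zero, zero_mul]
      simp only [hz, integral_zero]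
    · rw [integral_undef]
      intro hInt
      apply hmeas
      have hZ := Phi_zero_null hx hu hv
      have hcont : Continuous fun w => Phi x u v w := by unfold Phi; fun_prop
      have hASM : AEStronglyMeasurable
          (fun w => (Phi x u v w * f u * g v * h w) * (Phi x u v w * (f u * g v))⁻¹)
          ((volume : Measure ℝ).restrict (Ioi 0)) :=
        hInt.1.mul ((hcont.mul continuous_const).measurable.inv.aestronglyMeasurable)
      apply hASM.congr
      have hae : ∀ᵐ w ∂((volume : Measure ℝ).restrict (Ioi 0)), Phi x u v w ≠ 0 := by
        apply ae_restrict_of_ae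
        rw [ae_iff]
        simpa using hZ
      filter_upwards [hae] with w hw
      have hf0 : f u ≠ 0 := left_ne_zero_of_mul hfg
      have hg0 : g v ≠ 0 := right_ne_zero_of_mul hfg
      field_simp
  have mid0 : ∀ u ∈ Ioi (0:ℝ),
      (∫ v in Ioi (0:ℝ), ∫ w in Ioi (0:ℝ), Phi x u v w * f u * g v * h w) = 0 := by
    intro u hu
    rw [setIntegral_congr_fun measurableSet_Ioi (g := fun _ => (0:ℝ)) (fun v hv => inner0 u hu v hv)]
    simp
  rw [setIntegral_congr_fun measurableSet_Ioi (g := fun _ => (0:ℝ)) (fun u hu => mid0 u hu)]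
  simp

lemma good_case (f g h : ℝ → ℝ) (β : ℝ) (hβ : β ∈ Ioo (0:ℝ) 1)
    (hf : IntegrableOn f (Ioi 0)) (hg : IntegrableOn g (Ioi 0))
    (hh : IntegrableOn (fun w => |h w| * K0 (β * w)) (Ioi 0))
    (hmeas : AEStronglyMeasurable h ((volume : Measure ℝ).restrict (Ioi (0:ℝ)))) :
    ContinuousOn (fun x => (1 / (2 * Real.sqrt (2 * Real.pi))) *
      ∫ u in Ioi (0:ℝ), ∫ v in Ioi (0:ℝ), ∫ w in Ioi (0:ℝ),
        Phi x u v w * f u * g v * h w) (Ioi 0) ∧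
    (∃ M : ℝ, ∀ x ∈ Ioi (0:ℝ), |(1 / (2 * Real.sqrt (2 * Real.pi))) *
      ∫ u in Ioi (0:ℝ), ∫ v in Ioi (0:ℝ), ∫ w in Ioi (0:ℝ),
        Phi x u v w * f u * g v * h w| ≤ M) ∧
    Tendsto (fun x => (1 / (2 * Real.sqrt (2 * Real.pi))) *
      ∫ u in Ioi (0:ℝ), ∫ v in Ioi (0:ℝ), ∫ w in Ioi (0:ℝ),
        Phi x u v w * f u * g v * h w) atTop (nhds 0) := by
  obtain ⟨ε, hε, hK⟩ := K0_lower hβ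
  set c : ℝ := 1 / (2 * Real.sqrt (2 * Real.pi)) with hc
  have hcpos : 0 < c := by
    rw [hc]
    have : 0 < Real.sqrt (2 * Real.pi) := Real.sqrt_pos.mpr (by positivity)
    positivity
  set μ1 : Measure ℝ := (volume : Measure ℝ).restrict (Ioi 0) with hμ1
  set μ : Measure (ℝ × ℝ × ℝ) := μ1.prod (μ1.prod μ1) with hμ
  set F : ℝ → ℝ × ℝ × ℝ → ℝ :=
    fun x p => Phi x p.1 p.2.1 p.2.2 * f p.1 * g p.2.1 * h p.2.2 with hF
  set D : ℝ × ℝ × ℝ → ℝ :=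
    fun p => |f p.1| * (|g p.2.1| * (4 * (|h p.2.2| * Real.exp (-p.2.2)))) with hD
  have hH : Integrable (fun w => 4 * (|h w| * Real.exp (-w))) μ1 := by
    apply ((hh.const_mul (4 * ε⁻¹)).mono' ?_ ?_)
    · exact aestronglyMeasurable_const.mul
        (hmeas.norm.mul (Real.continuous_exp.comp continuous_neg).aestronglyMeasurable)
    · filter_upwards [ae_restrict_mem measurableSet_Ioi] with w hw
      rw [Real.norm_eq_abs, abs_of_nonneg (by positivity)]
      have h1 := hK w hw
      have h2 : ε * ε⁻¹ = 1 := mul_inv_cancel₀ (ne_of_gt hε)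
      have h5 : |h w| * Real.exp (-w) ≤ ε⁻¹ * (|h w| * K0 (β * w)) := by
        calc |h w| * Real.exp (-w) = (ε⁻¹ * |h w|) * (ε * Real.exp (-w)) := by
              rw [show (ε⁻¹ * |h w|) * (ε * Real.exp (-w))
                  = (ε * ε⁻¹) * (|h w| * Real.exp (-w)) by ring, h2, one_mul]
          _ ≤ (ε⁻¹ * |h w|) * K0 (β * w) := by
              exact mul_le_mul_of_nonneg_left h1 (by positivity)
          _ = ε⁻¹ * (|h w| * K0 (β * w)) := by ring
      linarith
  have hDint : Integrable D μ := hf.abs.mul_prod (hg.abs.mul_prod hH)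
  have haemem : ∀ᵐ p ∂μ, p ∈ (Ioi (0:ℝ)) ×ˢ ((Ioi (0:ℝ)) ×ˢ (Ioi (0:ℝ))) := by
    rw [hμ, hμ1, Measure.prod_restrict, Measure.prod_restrict]
    exact ae_restrict_mem ((measurableSet_Ioi.prod (measurableSet_Ioi.prod measurableSet_Ioi)))
  have hFmeas : ∀ x : ℝ, AEStronglyMeasurable (F x) μ := by
    intro x
    have h1 : Continuous fun p : ℝ × ℝ × ℝ => Phi x p.1 p.2.1 p.2.2 := by
      unfold Phi; fun_prop
    exact ((h1.aestronglyMeasurable.mul hf.1.comp_fst).mul hg.1.comp_fst.comp_snd).mul hmeas.comp_snd.comp_snd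
  have hFbound : ∀ x : ℝ, ∀ᵐ p ∂μ, ‖F x p‖ ≤ D p := by
    intro x
    filter_upwards [haemem] with p hp
    have hb := Phi_abs_le x p.1 p.2.1 p.2.2 (le_of_lt hp.2.2)
    rw [Real.norm_eq_abs, hF]
    calc |Phi x p.1 p.2.1 p.2.2 * f p.1 * g p.2.1 * h p.2.2|
        = |Phi x p.1 p.2.1 p.2.2| * |f p.1| * |g p.2.1| * |h p.2.2| := by
          rw [abs_mul, abs_mul, abs_mul]
      _ ≤ (4 * Real.exp (-p.2.2)) * |f p.1| * |g p.2.1| * |h p.2.2| := by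
          gcongr
      _ = D p := by rw [hD]; ring
  have hFint : ∀ x : ℝ, Integrable (F x) μ := fun x => hDint.mono' (hFmeas x) (hFbound x)
  have key : ∀ x : ℝ,
      (∫ u in Ioi (0:ℝ), ∫ v in Ioi (0:ℝ), ∫ w in Ioi (0:ℝ),
        Phi x u v w * f u * g v * h w) = ∫ p, F x p ∂μ := by
    intro x
    have h2 : (∫ u, (∫ q, F x (u, q) ∂(μ1.prod μ1)) ∂μ1) = ∫ p, F x p ∂μ :=
      MeasureTheory.integral_integral (hFint x)
    rw [← h2]
    apply integral_congr_ae
    filter_upwards [(hFint x).prod_right_ae] with u hu_int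
    exact MeasureTheory.integral_integral hu_int
  refine ⟨?_, ?_, ?_⟩
  · have hcont : Continuous fun x => ∫ p, F x p ∂μ := by
      apply continuous_of_dominated hFmeas hFbound hDint
      filter_upwards with p
      have h1 : Continuous fun x => Phi x p.1 p.2.1 p.2.2 := by unfold Phi; fun_prop
      exact ((h1.mul continuous_const).mul continuous_const).mul continuous_const
    have : (fun x => c * ∫ u in Ioi (0:ℝ), ∫ v in Ioi (0:ℝ), ∫ w in Ioi (0:ℝ),
        Phi x u v w * f u * g v * h w) = fun x => c * ∫ p, F x p ∂μ := by
      funext x; rw [key x]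
    rw [this]
    exact (continuous_const.mul hcont).continuousOn
  · refine ⟨c * ∫ p, D p ∂μ, fun x _ => ?_⟩
    rw [key x, abs_mul, abs_of_pos hcpos]
    apply mul_le_mul_of_nonneg_left _ (le_of_lt hcpos)
    calc |∫ p, F x p ∂μ| ≤ ∫ p, ‖F x p‖ ∂μ := by
          rw [← Real.norm_eq_abs]; exact norm_integral_le_integral_norm _
      _ ≤ ∫ p, D p ∂μ := integral_mono_ae (hFint x).norm hDint (hFbound x)
  · have hlim : ∀ᵐ p ∂μ, Tendsto (fun x => F x p) atTop (nhds 0) := by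
      filter_upwards [haemem] with p hp
      have h1 := Phi_tendsto p.1 p.2.1 p.2.2 hp.2.2
      have h2 := ((h1.mul_const (f p.1)).mul_const (g p.2.1)).mul_const (h p.2.2)
      simpa using h2
    have ht : Tendsto (fun x => ∫ p, F x p ∂μ) atTop (nhds (∫ _ : ℝ × ℝ × ℝ, (0:ℝ) ∂μ)) :=
      tendsto_integral_filter_of_dominated_convergence D (Eventually.of_forall hFmeas)
        (Eventually.of_forall hFbound) hDint hlim
    rw [integral_zero] at ht
    have : (fun x => c * ∫ u in Ioi (0:ℝ), ∫ v in Ioi (0:ℝ), ∫ w in Ioi (0:ℝ),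
        Phi x u v w * f u * g v * h w) = fun x => c * ∫ p, F x p ∂μ := by
      funext x; rw [key x]
    rw [this]
    simpa using ht.const_mul c


theorem stmt7 (f g h : ℝ → ℝ) (β : ℝ) (hβ : β ∈ Ioo (0:ℝ) 1)
    (hf : IntegrableOn f (Ioi 0)) (hg : IntegrableOn g (Ioi 0))
    (hh : IntegrableOn (fun w => |h w| * K0 (β * w)) (Ioi 0)) :
    ContinuousOn (polyconv f g h) (Ioi 0) ∧
      (∃ M : ℝ, ∀ x ∈ Ioi (0:ℝ), |polyconv f g h x| ≤ M) ∧
      Tendsto (polyconv f g h) atTop (nhds 0) := by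
  by_cases hmeas : AEStronglyMeasurable h ((volume : Measure ℝ).restrict (Ioi (0:ℝ)))
  · have hpc : polyconv f g h = fun x => (1 / (2 * Real.sqrt (2 * Real.pi))) *
        ∫ u in Ioi (0:ℝ), ∫ v in Ioi (0:ℝ), ∫ w in Ioi (0:ℝ),
          Phi x u v w * f u * g v * h w := rfl
    rw [hpc]
    exact good_case f g h β hβ hf hg hh hmeas
  · have h0 : ∀ x ∈ Ioi (0:ℝ), polyconv f g h x = 0 := bad_case f g h hmeas
    refine ⟨(continuousOn_const (c := (0:ℝ))).congr h0, ⟨0, fun x hx => by rw [h0 x hx]; simp⟩, ?_⟩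
    have hev : (fun _ : ℝ => (0:ℝ)) =ᶠ[atTop] polyconv f g h := by
      filter_upwards [eventually_gt_atTop 0] with x hx using (h0 x hx).symm
    exact Tendsto.congr' hev tendsto_const_nhds
end

section
/- Let p, q, r, s ∈ (1,∞) with 1/p + 1/q + 1/r + 1/s = 3, and β ∈ (0,1]. For f ∈ L^p(ℝ₊), g ∈ L^q(ℝ₊), h ∈ L_r^{0,β}(ℝ₊), k ∈ L^s(ℝ₊), one has |∫₀^∞ P(f,g,h)(x)·k(x) dx| ≤ √(2/π)·(sech t)^{1-1/r} ‖f‖_{L^p} ‖g‖_{L^q} ‖h‖_{L_r^{0,β}} ‖k‖_{L^s}, where sech t = 1/cosh t with cosh t = min{cosh(x-u+v), cosh(x-u-v), cosh(x+u+v), cosh(x+u-v)}. -/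
open MeasureTheory Set Filter
open scoped ENNReal

noncomputable def S13 (w a : ℝ) : ℝ≥0∞ := ENNReal.ofReal (Real.exp (-w * Real.cosh a))

@[fun_prop]
lemma S13_meas (w : ℝ) : Measurable (S13 w) := by
  unfold S13; fun_prop

lemma S13_even (w a : ℝ) : S13 w (-a) = S13 w a := by simp [S13]

lemma lint_shift (φ : ℝ → ℝ≥0∞) (c : ℝ) {s : Set ℝ} (hs : MeasurableSet s) :
    ∫⁻ y in (fun y => c + y) ⁻¹' s, φ (c + y) = ∫⁻ z in s, φ z := by
  rw [← lintegral_indicator hs, ← lintegral_indicator ((measurable_const_add c) hs)]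
  have h1 : ∀ y : ℝ, ((fun y => c + y) ⁻¹' s).indicator (fun y => φ (c + y)) y
      = s.indicator φ (c + y) := by
    intro y
    by_cases hy : c + y ∈ s
    · rw [Set.indicator_of_mem (by simpa using hy), Set.indicator_of_mem hy]
    · rw [Set.indicator_of_notMem (by simpa using hy), Set.indicator_of_notMem hy]
  calc ∫⁻ y, ((fun y => c + y) ⁻¹' s).indicator (fun y => φ (c + y)) y
      = ∫⁻ y, s.indicator φ (c + y) := lintegral_congr h1
    _ = ∫⁻ y, s.indicator φ y := lintegral_add_left_eq_self (s.indicator φ) c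

lemma lint_reflect (φ : ℝ → ℝ≥0∞) (hφ : Measurable φ) :
    ∫⁻ y in Ioi (0:ℝ), φ (-y) = ∫⁻ z in Iio (0:ℝ), φ z := by
  have hpre : Ioi (0:ℝ) = Neg.neg ⁻¹' (Iio (0:ℝ)) := by ext y; simp
  rw [← lintegral_indicator measurableSet_Iio, hpre, ← lintegral_indicator
    (measurable_neg measurableSet_Iio)]
  have h1 : ∀ y : ℝ, (Neg.neg ⁻¹' (Iio (0:ℝ))).indicator (fun y => φ (-y)) y
      = (Iio (0:ℝ)).indicator φ (-y) := by
    intro y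
    by_cases hy : -y ∈ Iio (0:ℝ)
    · rw [Set.indicator_of_mem (by simpa using hy), Set.indicator_of_mem hy]
    · rw [Set.indicator_of_notMem (by simpa using hy), Set.indicator_of_notMem hy]
  calc ∫⁻ y, (Neg.neg ⁻¹' (Iio (0:ℝ))).indicator (fun y => φ (-y)) y
      = ∫⁻ y, (Iio (0:ℝ)).indicator φ (-y) := lintegral_congr h1
    _ = ∫⁻ y, (Iio (0:ℝ)).indicator φ y :=
        (Measure.measurePreserving_neg volume).lintegral_comp
          (hφ.indicator measurableSet_Iio)

lemma lint_shift_Ioi (φ : ℝ → ℝ≥0∞) (c : ℝ) :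
    ∫⁻ y in Ioi (0:ℝ), φ (c + y) = ∫⁻ z in Ioi c, φ z := by
  have : (fun y => c + y) ⁻¹' (Ioi c) = Ioi (0:ℝ) := by ext y; simp
  rw [← this, lint_shift φ c measurableSet_Ioi]

lemma lint_shift_neg (φ : ℝ → ℝ≥0∞) (hφ : Measurable φ) (c : ℝ) :
    ∫⁻ y in Ioi (0:ℝ), φ (c - y) = ∫⁻ z in Iio c, φ z := by
  have h1 : ∫⁻ y in Ioi (0:ℝ), φ (c - y) = ∫⁻ y in Ioi (0:ℝ), (fun z => φ (c + z)) (-y) := by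
    apply lintegral_congr; intro y; simp [sub_eq_add_neg]
  rw [h1, lint_reflect (fun z => φ (c + z)) (by fun_prop)]
  have h2 : (fun y => c + y) ⁻¹' (Iio c) = Iio (0:ℝ) := by ext y; simp
  calc ∫⁻ z in Iio (0:ℝ), φ (c + z) = ∫⁻ z in (fun y => c + y) ⁻¹' (Iio c), φ (c + z) := by
        rw [h2]
    _ = ∫⁻ z in Iio c, φ z := lint_shift φ c measurableSet_Iio

lemma lint_pair (φ : ℝ → ℝ≥0∞) (hφ : Measurable φ) (hev : ∀ z, φ (-z) = φ z) (c : ℝ) :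
    (∫⁻ y in Ioi (0:ℝ), φ (c + y)) + (∫⁻ y in Ioi (0:ℝ), φ (c - y))
      = 2 * ∫⁻ y in Ioi (0:ℝ), φ y := by
  have hIio : ∫⁻ z in Iio (0:ℝ), φ z = ∫⁻ z in Ioi (0:ℝ), φ z := by
    rw [← lint_reflect φ hφ]
    exact lintegral_congr fun y => hev y
  have hIci : ∀ a : ℝ, ∫⁻ z in Ioi a, φ z = ∫⁻ z in Ici a, φ z :=
    fun a => setLIntegral_congr Ioi_ae_eq_Ici
  have hwhole : ∀ a : ℝ, (∫⁻ z in Ioi a, φ z) + (∫⁻ z in Iio a, φ z) = ∫⁻ z, φ z := by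
    intro a
    rw [hIci a]
    have := lintegral_add_compl φ (measurableSet_Ici (a := a)) (μ := volume)
    rwa [compl_Ici] at this
  rw [lint_shift_Ioi, lint_shift_neg φ hφ, hwhole c, ← hwhole 0, hIio, two_mul]

lemma ennnorm_abs13 (x : ℝ) : (‖x‖₊ : ℝ≥0∞) = ENNReal.ofReal |x| :=
  Real.enorm_eq_ofReal_abs x

noncomputable def A13 (x u v w : ℝ) : ℝ≥0∞ := ENNReal.ofReal |Phi x u v w|

lemma A13_meas : Measurable fun z : ℝ × ℝ × ℝ × ℝ => A13 z.1 z.2.1 z.2.2.1 z.2.2.2 := by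
  unfold A13 Phi; fun_prop

noncomputable def LK (w : ℝ) : ℝ≥0∞ := ∫⁻ t in Ioi (0:ℝ), S13 w t

lemma A13_le (x u v w : ℝ) :
    A13 x u v w ≤ S13 w (x - u + v) + S13 w (x - u - v) + S13 w (x + u + v)
      + S13 w (x + u - v) := by
  unfold A13 S13
  rw [← ENNReal.ofReal_add (by positivity) (by positivity),
    ← ENNReal.ofReal_add (by positivity) (by positivity),
    ← ENNReal.ofReal_add (by positivity) (by positivity)]
  apply ENNReal.ofReal_le_ofReal
  unfold Phi
  rw [abs_le]
  constructor <;>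
    nlinarith [Real.exp_pos (-w * Real.cosh (x - u + v)),
      Real.exp_pos (-w * Real.cosh (x - u - v)), Real.exp_pos (-w * Real.cosh (x + u + v)),
      Real.exp_pos (-w * Real.cosh (x + u - v))]

lemma four_split (φ₁ φ₂ φ₃ φ₄ : ℝ → ℝ≥0∞) (h₁ : Measurable φ₁) (h₂ : Measurable φ₂)
    (h₃ : Measurable φ₃) :
    ∫⁻ y in Ioi (0:ℝ), (φ₁ y + φ₂ y + φ₃ y + φ₄ y)
      = (∫⁻ y in Ioi (0:ℝ), φ₁ y) + (∫⁻ y in Ioi (0:ℝ), φ₂ y) + (∫⁻ y in Ioi (0:ℝ), φ₃ y)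
        + (∫⁻ y in Ioi (0:ℝ), φ₄ y) := by
  rw [lintegral_add_left (by fun_prop) φ₄, lintegral_add_left (by fun_prop) φ₃,
    lintegral_add_left h₁ φ₂]

lemma pair4 (w c₁ c₂ : ℝ) :
    ∫⁻ y in Ioi (0:ℝ), (S13 w (c₁ + y) + S13 w (c₁ - y) + S13 w (c₂ + y) + S13 w (c₂ - y))
      = 4 * LK w := by
  unfold LK
  rw [four_split (fun y => S13 w (c₁ + y)) (fun y => S13 w (c₁ - y))
    (fun y => S13 w (c₂ + y)) (fun y => S13 w (c₂ - y)) ((S13_meas w).comp (by fun_prop))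
    ((S13_meas w).comp (by fun_prop)) ((S13_meas w).comp (by fun_prop)),
    lint_pair (S13 w) (S13_meas w) (S13_even w) c₁, add_assoc,
    lint_pair (S13 w) (S13_meas w) (S13_even w) c₂]
  ring

lemma marg_u (x v w : ℝ) : ∫⁻ u in Ioi (0:ℝ), A13 x u v w ≤ 4 * LK w := by
  refine le_trans (lintegral_mono fun u => A13_le x u v w) (le_of_eq ?_)
  have hre : ∀ u : ℝ, S13 w (x - u + v) + S13 w (x - u - v) + S13 w (x + u + v)
      + S13 w (x + u - v)
      = S13 w ((x + v) + u) + S13 w ((x + v) - u) + S13 w ((x - v) + u)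
        + S13 w ((x - v) - u) := by
    intro u
    rw [show x - u + v = (x + v) - u by ring, show x - u - v = (x - v) - u by ring,
      show x + u + v = (x + v) + u by ring, show x + u - v = (x - v) + u by ring]
    ring
  rw [lintegral_congr hre]
  exact pair4 w (x + v) (x - v)

lemma marg_v (x u w : ℝ) : ∫⁻ v in Ioi (0:ℝ), A13 x u v w ≤ 4 * LK w := by
  refine le_trans (lintegral_mono fun v => A13_le x u v w) (le_of_eq ?_)
  have hre : ∀ v : ℝ, S13 w (x - u + v) + S13 w (x - u - v) + S13 w (x + u + v)
      + S13 w (x + u - v)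
      = S13 w ((x - u) + v) + S13 w ((x - u) - v) + S13 w ((x + u) + v)
        + S13 w ((x + u) - v) := by
    intro v
    rw [show x - u + v = (x - u) + v by ring, show x - u - v = (x - u) - v by ring,
      show x + u + v = (x + u) + v by ring, show x + u - v = (x + u) - v by ring]
  rw [lintegral_congr hre]
  exact pair4 w (x - u) (x + u)

lemma marg_x (u v w : ℝ) : ∫⁻ x in Ioi (0:ℝ), A13 x u v w ≤ 4 * LK w := by
  refine le_trans (lintegral_mono fun x => A13_le x u v w) (le_of_eq ?_)
  have hre : ∀ x : ℝ, S13 w (x - u + v) + S13 w (x - u - v) + S13 w (x + u + v)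
      + S13 w (x + u - v)
      = S13 w ((v - u) + x) + S13 w ((v - u) - x) + S13 w ((-(u + v)) + x)
        + S13 w ((-(u + v)) - x) := by
    intro x
    rw [show x - u + v = (v - u) + x by ring, show x - u - v = (-(u + v)) + x by ring,
      show S13 w (x + u + v) = S13 w ((-(u + v)) - x) by
        rw [show (-(u + v)) - x = -(x + u + v) by ring, S13_even],
      show S13 w (x + u - v) = S13 w ((v - u) - x) by
        rw [show (v - u) - x = -(x + u - v) by ring, S13_even]]
    ring
  rw [lintegral_congr hre]
  exact pair4 w (v - u) (-(u + v))

lemma lint_exp_w (a : ℝ) :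
    ∫⁻ w in Ioi (0:ℝ), ENNReal.ofReal (Real.exp (-w * Real.cosh a)) ≤ 1 := by
  have hc : (0:ℝ) < Real.cosh a := Real.cosh_pos a
  have hre : ∀ w : ℝ, Real.exp (-w * Real.cosh a) = Real.exp (-(Real.cosh a) * w) := by
    intro w; ring_nf
  have hint : IntegrableOn (fun w : ℝ => Real.exp (-(Real.cosh a) * w)) (Ioi 0) :=
    exp_neg_integrableOn_Ioi 0 hc
  calc ∫⁻ w in Ioi (0:ℝ), ENNReal.ofReal (Real.exp (-w * Real.cosh a))
      = ∫⁻ w in Ioi (0:ℝ), ENNReal.ofReal (Real.exp (-(Real.cosh a) * w)) := by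
        apply lintegral_congr; intro w; rw [hre]
    _ = ENNReal.ofReal (∫ w in Ioi (0:ℝ), Real.exp (-(Real.cosh a) * w)) :=
        (ofReal_integral_eq_lintegral_ofReal hint
          (Filter.Eventually.of_forall fun w => (Real.exp_pos _).le)).symm
    _ ≤ 1 := by
        rw [ENNReal.ofReal_le_one]
        have hval : ∫ w in Ioi (0:ℝ), Real.exp (-(Real.cosh a) * w) = (Real.cosh a)⁻¹ := by
          have h0 : ∫ w in Ioi (0:ℝ), Real.exp (-(Real.cosh a) * w)
              = ∫ w in Ioi (0:ℝ), (fun z => Real.exp (-z)) (Real.cosh a * w) := by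
            apply integral_congr_ae; filter_upwards with w; ring_nf
          rw [h0, MeasureTheory.integral_comp_mul_left_Ioi (fun z => Real.exp (-z)) 0 hc]
          simp [integral_exp_neg_Ioi, integral_exp_Iic_zero]
        rw [hval]
        rw [inv_le_one_iff₀]
        right; exact Real.one_le_cosh a
  
lemma marg_w (x u v : ℝ) : ∫⁻ w in Ioi (0:ℝ), A13 x u v w ≤ 4 := by
  refine le_trans (lintegral_mono fun w => A13_le x u v w) ?_
  have hs : ∀ b : ℝ, Measurable fun w : ℝ => S13 w b := by
    intro b; unfold S13; fun_prop
  rw [four_split (fun w => S13 w (x - u + v)) (fun w => S13 w (x - u - v))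
    (fun w => S13 w (x + u + v)) (fun w => S13 w (x + u - v)) (hs _) (hs _) (hs _)]
  have h4 : (4 : ℝ≥0∞) = 1 + 1 + 1 + 1 := by norm_num
  rw [h4]
  exact add_le_add (add_le_add (add_le_add (lint_exp_w _) (lint_exp_w _)) (lint_exp_w _))
    (lint_exp_w _)

lemma cosh_integrable {c : ℝ} (hc : 0 < c) :
    IntegrableOn (fun t : ℝ => Real.exp (-c * Real.cosh t)) (Ioi 0) := by
  refine Integrable.mono (exp_neg_integrableOn_Ioi 0 hc)
    ((by fun_prop : Continuous fun t : ℝ => Real.exp (-c * Real.cosh t)).aestronglyMeasurable) ?_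
  filter_upwards [ae_restrict_mem measurableSet_Ioi] with t ht
  rw [Real.norm_eq_abs, Real.norm_eq_abs, abs_of_pos (Real.exp_pos _),
    abs_of_pos (Real.exp_pos _), Real.exp_le_exp]
  have h1 : t ≤ Real.cosh t :=
    le_trans (le_of_lt (Real.self_lt_sinh_iff.2 ht)) (Real.sinh_lt_cosh t).le
  nlinarith

lemma LK_eq {c : ℝ} (hc : 0 < c) : LK c = ENNReal.ofReal (K0 c) := by
  unfold LK K0 S13
  rw [← ofReal_integral_eq_lintegral_ofReal (cosh_integrable hc)
    (Filter.Eventually.of_forall fun t => (Real.exp_pos _).le)]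

lemma LK_mono {β w : ℝ} (hβ : 0 < β) (hβ1 : β ≤ 1) (hw : 0 ≤ w) : LK w ≤ LK (β * w) := by
  unfold LK
  apply lintegral_mono
  intro t
  unfold S13
  apply ENNReal.ofReal_le_ofReal
  rw [Real.exp_le_exp]
  have h1 := Real.cosh_pos t
  have h2 : β * w ≤ w := by nlinarith
  nlinarith [mul_le_mul_of_nonneg_right h2 h1.le]

lemma K0_nonneg (c : ℝ) : 0 ≤ K0 c :=
  integral_nonneg fun t => (Real.exp_pos _).le

section rot

variable {μ : Measure ℝ} [SFinite μ]

lemma swap2 (H : ℝ → ℝ → ℝ≥0∞) (hH : Measurable fun z : ℝ × ℝ => H z.1 z.2) :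
    ∫⁻ a, (∫⁻ b, H a b ∂μ) ∂μ = ∫⁻ b, (∫⁻ a, H a b ∂μ) ∂μ :=
  lintegral_lintegral_swap hH.aemeasurable

lemma rot3 (H : ℝ → ℝ → ℝ → ℝ≥0∞)
    (hH : Measurable fun z : ℝ × ℝ × ℝ => H z.1 z.2.1 z.2.2) :
    ∫⁻ a, (∫⁻ b, (∫⁻ c, H a b c ∂μ) ∂μ) ∂μ
      = ∫⁻ b, (∫⁻ c, (∫⁻ a, H a b c ∂μ) ∂μ) ∂μ := by
  have m1 : Measurable fun z : ℝ × ℝ => ∫⁻ c, H z.1 z.2 c ∂μ :=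
    Measurable.lintegral_prod_right' (f := fun q : (ℝ × ℝ) × ℝ => H q.1.1 q.1.2 q.2)
      (hH.comp ((measurable_fst.comp measurable_fst).prodMk
        ((measurable_snd.comp measurable_fst).prodMk measurable_snd)))
  rw [swap2 (fun a b => ∫⁻ c, H a b c ∂μ) m1]
  apply lintegral_congr
  intro b
  exact swap2 (fun a c => H a b c)
    (hH.comp (measurable_fst.prodMk (measurable_const.prodMk measurable_snd)))

lemma rot4 (H : ℝ → ℝ → ℝ → ℝ → ℝ≥0∞)
    (hH : Measurable fun z : ℝ × ℝ × ℝ × ℝ => H z.1 z.2.1 z.2.2.1 z.2.2.2) :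
    ∫⁻ a, (∫⁻ b, (∫⁻ c, (∫⁻ d, H a b c d ∂μ) ∂μ) ∂μ) ∂μ
      = ∫⁻ b, (∫⁻ c, (∫⁻ d, (∫⁻ a, H a b c d ∂μ) ∂μ) ∂μ) ∂μ := by
  have m2 : Measurable fun z : (ℝ × ℝ) × ℝ => ∫⁻ d, H z.1.1 z.1.2 z.2 d ∂μ :=
    Measurable.lintegral_prod_right'
      (f := fun q : ((ℝ × ℝ) × ℝ) × ℝ => H q.1.1.1 q.1.1.2 q.1.2 q.2)
      (hH.comp (((measurable_fst.comp (measurable_fst.comp measurable_fst)).prodMk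
        ((measurable_snd.comp (measurable_fst.comp measurable_fst)).prodMk
          ((measurable_snd.comp measurable_fst).prodMk measurable_snd)))))
  have m1 : Measurable fun z : ℝ × ℝ => ∫⁻ c, (∫⁻ d, H z.1 z.2 c d ∂μ) ∂μ :=
    Measurable.lintegral_prod_right' m2
  rw [swap2 (fun a b => ∫⁻ c, (∫⁻ d, H a b c d ∂μ) ∂μ) m1]
  apply lintegral_congr
  intro b
  exact rot3 (fun a c d => H a b c d)
    (hH.comp (measurable_fst.prodMk (measurable_const.prodMk
      ((measurable_fst.comp measurable_snd).prodMk (measurable_snd.comp measurable_snd)))))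

end rot

lemma key_alg {p q r s : ℝ} (hp : 1 < p) (hq : 1 < q) (hr : 1 < r) (hs : 1 < s)
    (hsum : 1/p + 1/q + 1/r + 1/s = 3) (a F G H K : ℝ≥0∞) :
    (a * (G * (H * K))) ^ (1 - 1/p) * (a * (F * (H * K))) ^ (1 - 1/q)
        * (a * (F * (G * K))) ^ (1 - 1/r) * (a * (F * (G * H))) ^ (1 - 1/s)
      = a * (F ^ (1/p) * (G ^ (1/q) * (H ^ (1/r) * K ^ (1/s)))) := by
  have hp0 : (0:ℝ) < 1/p := by positivity
  have hq0 : (0:ℝ) < 1/q := by positivity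
  have hr0 : (0:ℝ) < 1/r := by positivity
  have hs0 : (0:ℝ) < 1/s := by positivity
  have hp1 : 1/p ≤ 1 := by rw [div_le_one (by linarith)]; linarith
  have hq1 : 1/q ≤ 1 := by rw [div_le_one (by linarith)]; linarith
  have hr1 : 1/r ≤ 1 := by rw [div_le_one (by linarith)]; linarith
  have hs1 : 1/s ≤ 1 := by rw [div_le_one (by linarith)]; linarith
  have hc₀ : (0:ℝ) ≤ 1 - 1/p := by linarith
  have hc₁ : (0:ℝ) ≤ 1 - 1/q := by linarith
  have hc₂ : (0:ℝ) ≤ 1 - 1/r := by linarith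
  have hc₃ : (0:ℝ) ≤ 1 - 1/s := by linarith
  have collect : ∀ (x : ℝ≥0∞) (e₁ e₂ e₃ : ℝ), 0 ≤ e₁ → 0 ≤ e₂ → 0 ≤ e₃ →
      x ^ e₁ * x ^ e₂ * x ^ e₃ = x ^ (e₁ + e₂ + e₃) := by
    intro x e₁ e₂ e₃ h₁ h₂ h₃
    rw [← ENNReal.rpow_add_of_nonneg _ _ h₁ h₂,
      ← ENNReal.rpow_add_of_nonneg _ _ (by linarith) h₃]
  have ea : a ^ (1 - 1/p) * a ^ (1 - 1/q) * a ^ (1 - 1/r) * a ^ (1 - 1/s) = a := by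
    rw [← ENNReal.rpow_add_of_nonneg _ _ hc₀ hc₁,
      ← ENNReal.rpow_add_of_nonneg _ _ (by linarith) hc₂,
      ← ENNReal.rpow_add_of_nonneg _ _ (by linarith) hc₃,
      show (1 - 1/p) + (1 - 1/q) + (1 - 1/r) + (1 - 1/s) = 1 by linarith,
      ENNReal.rpow_one]
  have eF : F ^ (1 - 1/q) * F ^ (1 - 1/r) * F ^ (1 - 1/s) = F ^ (1/p) := by
    rw [collect F _ _ _ hc₁ hc₂ hc₃, show (1 - 1/q) + (1 - 1/r) + (1 - 1/s) = 1/p by linarith]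
  have eG : G ^ (1 - 1/p) * G ^ (1 - 1/r) * G ^ (1 - 1/s) = G ^ (1/q) := by
    rw [collect G _ _ _ hc₀ hc₂ hc₃, show (1 - 1/p) + (1 - 1/r) + (1 - 1/s) = 1/q by linarith]
  have eH : H ^ (1 - 1/p) * H ^ (1 - 1/q) * H ^ (1 - 1/s) = H ^ (1/r) := by
    rw [collect H _ _ _ hc₀ hc₁ hc₃, show (1 - 1/p) + (1 - 1/q) + (1 - 1/s) = 1/r by linarith]
  have eK : K ^ (1 - 1/p) * K ^ (1 - 1/q) * K ^ (1 - 1/r) = K ^ (1/s) := by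
    rw [collect K _ _ _ hc₀ hc₁ hc₂, show (1 - 1/p) + (1 - 1/q) + (1 - 1/r) = 1/s by linarith]
  rw [ENNReal.mul_rpow_of_nonneg _ _ hc₀, ENNReal.mul_rpow_of_nonneg _ _ hc₀,
    ENNReal.mul_rpow_of_nonneg _ _ hc₀,
    ENNReal.mul_rpow_of_nonneg _ _ hc₁, ENNReal.mul_rpow_of_nonneg _ _ hc₁,
    ENNReal.mul_rpow_of_nonneg _ _ hc₁,
    ENNReal.mul_rpow_of_nonneg _ _ hc₂, ENNReal.mul_rpow_of_nonneg _ _ hc₂,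
    ENNReal.mul_rpow_of_nonneg _ _ hc₂,
    ENNReal.mul_rpow_of_nonneg _ _ hc₃, ENNReal.mul_rpow_of_nonneg _ _ hc₃,
    ENNReal.mul_rpow_of_nonneg _ _ hc₃]
  calc a ^ (1 - 1/p) * (G ^ (1 - 1/p) * (H ^ (1 - 1/p) * K ^ (1 - 1/p)))
        * (a ^ (1 - 1/q) * (F ^ (1 - 1/q) * (H ^ (1 - 1/q) * K ^ (1 - 1/q))))
        * (a ^ (1 - 1/r) * (F ^ (1 - 1/r) * (G ^ (1 - 1/r) * K ^ (1 - 1/r))))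
        * (a ^ (1 - 1/s) * (F ^ (1 - 1/s) * (G ^ (1 - 1/s) * H ^ (1 - 1/s))))
      = (a ^ (1 - 1/p) * a ^ (1 - 1/q) * a ^ (1 - 1/r) * a ^ (1 - 1/s))
        * ((F ^ (1 - 1/q) * F ^ (1 - 1/r) * F ^ (1 - 1/s))
        * ((G ^ (1 - 1/p) * G ^ (1 - 1/r) * G ^ (1 - 1/s))
        * ((H ^ (1 - 1/p) * H ^ (1 - 1/q) * H ^ (1 - 1/s))
        * (K ^ (1 - 1/p) * K ^ (1 - 1/q) * K ^ (1 - 1/r))))) := by ring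
    _ = a * (F ^ (1/p) * (G ^ (1/q) * (H ^ (1/r) * K ^ (1/s)))) := by
        rw [ea, eF, eG, eH, eK]

section prod4

variable {μ : Measure ℝ} [SFinite μ]

lemma prod4_eq (F : ℝ → ℝ → ℝ → ℝ → ℝ≥0∞)
    (hF : Measurable fun z : ℝ × ℝ × ℝ × ℝ => F z.1 z.2.1 z.2.2.1 z.2.2.2) :
    ∫⁻ z : ℝ × ℝ × ℝ × ℝ, F z.1 z.2.1 z.2.2.1 z.2.2.2 ∂(μ.prod (μ.prod (μ.prod μ)))
      = ∫⁻ a, (∫⁻ b, (∫⁻ c, (∫⁻ d, F a b c d ∂μ) ∂μ) ∂μ) ∂μ := by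
  rw [lintegral_prod _ hF.aemeasurable]
  apply lintegral_congr
  intro a
  have h1 : Measurable fun y : ℝ × ℝ × ℝ => F a y.1 y.2.1 y.2.2 :=
    hF.comp (measurable_const.prodMk measurable_id)
  rw [lintegral_prod _ h1.aemeasurable]
  apply lintegral_congr
  intro b
  have h2 : Measurable fun y : ℝ × ℝ => F a b y.1 y.2 :=
    h1.comp (measurable_const.prodMk measurable_id)
  rw [lintegral_prod _ h2.aemeasurable]

end prod4

lemma rep_exists (φ : ℝ → ℝ) {e : ℝ} (he : 0 < e)
    (hint : AEMeasurable (fun x => |φ x| ^ e) (volume.restrict (Ioi 0))) :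
    ∃ E : ℝ → ℝ≥0∞, Measurable E ∧ (∀ x, E x ≠ ⊤) ∧
      (fun x => E x ^ (1/e)) =ᵐ[volume.restrict (Ioi 0)] (fun x => ENNReal.ofReal |φ x|) ∧
      E =ᵐ[volume.restrict (Ioi 0)] (fun x => ENNReal.ofReal (|φ x| ^ e)) := by
  refine ⟨fun x => ENNReal.ofReal (hint.mk _ x),
    ENNReal.measurable_ofReal.comp hint.measurable_mk, fun x => ENNReal.ofReal_ne_top, ?_, ?_⟩
  · filter_upwards [hint.ae_eq_mk] with x hx
    rw [← hx, ENNReal.ofReal_rpow_of_nonneg (Real.rpow_nonneg (abs_nonneg _) _)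
      (by positivity), one_div, Real.rpow_rpow_inv (abs_nonneg _) (ne_of_gt he)]
  · filter_upwards [hint.ae_eq_mk] with x hx
    rw [← hx]

lemma pow_inv_pow {e : ℝ} (he : e ≠ 0) (y : ℝ≥0∞) : (y ^ (1/e)) ^ e = y := by
  rw [← ENNReal.rpow_mul, one_div, inv_mul_cancel₀ he, ENNReal.rpow_one]

lemma lint_eq_ofReal {φ : ℝ → ℝ} (hint : IntegrableOn φ (Ioi 0)) (hnn : ∀ x, 0 ≤ φ x)
    {E : ℝ → ℝ≥0∞} (hE : E =ᵐ[volume.restrict (Ioi 0)] fun x => ENNReal.ofReal (φ x)) :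
    ∫⁻ x in Ioi (0:ℝ), E x = ENNReal.ofReal (∫ x in Ioi (0:ℝ), φ x) := by
  rw [lintegral_congr_ae hE,
    ← ofReal_integral_eq_lintegral_ofReal hint (Filter.Eventually.of_forall hnn)]

lemma LK_measurable : Measurable LK := by
  have : Measurable fun z : ℝ × ℝ => S13 z.1 z.2 := by unfold S13; fun_prop
  exact Measurable.lintegral_prod_right' (f := fun z : ℝ × ℝ => S13 z.1 z.2) this

lemma K0_pos {c : ℝ} (hc : 0 < c) : 0 < K0 c := by
  unfold K0
  rw [setIntegral_pos_iff_support_of_nonneg_ae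
    (Filter.Eventually.of_forall fun t => (Real.exp_pos _).le) (cosh_integrable hc)]
  have hsupp : (Function.support fun t : ℝ => Real.exp (-c * Real.cosh t)) = univ := by
    ext t; simp [Function.support, (Real.exp_pos _).ne']
  rw [hsupp, univ_inter]
  simp [Real.volume_Ioi]


theorem stmt13 (p q r s β t : ℝ) (hp : 1 < p) (hq : 1 < q) (hr : 1 < r) (hs : 1 < s)
    (hsum : 1/p + 1/q + 1/r + 1/s = 3) (hβ : β ∈ Ioc (0:ℝ) 1)
    (f g h k : ℝ → ℝ)
    (ht : ∀ x u v : ℝ, 0 ≤ x → 0 ≤ u → 0 ≤ v → Real.cosh t ≤ coshMin x u v)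
    (hf : IntegrableOn (fun x => |f x| ^ p) (Ioi 0))
    (hg : IntegrableOn (fun x => |g x| ^ q) (Ioi 0))
    (hh : IntegrableOn (fun x => |h x| ^ r * K0 (β * x)) (Ioi 0))
    (hk : IntegrableOn (fun x => |k x| ^ s) (Ioi 0)) :
    |∫ x in Ioi (0:ℝ), polyconv f g h x * k x| ≤
      Real.sqrt (2 / Real.pi) * (1 / Real.cosh t) ^ (1 - 1/r) *
        (∫ x in Ioi (0:ℝ), |f x| ^ p) ^ (1/p) *
        (∫ x in Ioi (0:ℝ), |g x| ^ q) ^ (1/q) *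
        (∫ x in Ioi (0:ℝ), |h x| ^ r * K0 (β * x)) ^ (1/r) *
        (∫ x in Ioi (0:ℝ), |k x| ^ s) ^ (1/s) := by
  obtain ⟨hβ0, hβ1⟩ := hβ
  have hp0 : (0:ℝ) < p := by linarith
  have hq0 : (0:ℝ) < q := by linarith
  have hr0 : (0:ℝ) < r := by linarith
  have hs0 : (0:ℝ) < s := by linarith
  have hcosh : Real.cosh t = 1 := by
    have h1 := ht 0 0 0 le_rfl le_rfl le_rfl
    have h2 : coshMin 0 0 0 = 1 := by unfold coshMin; norm_num
    rw [h2] at h1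
    exact le_antisymm h1 (Real.one_le_cosh t)
  -- measurable representatives
  obtain ⟨fE, hfEm, hfEt, hFue, hfEe⟩ := rep_exists f hp0 hf.aestronglyMeasurable.aemeasurable
  obtain ⟨gE, hgEm, hgEt, hGue, hgEe⟩ := rep_exists g hq0 hg.aestronglyMeasurable.aemeasurable
  obtain ⟨kE, hkEm, hkEt, hKue, hkEe⟩ := rep_exists k hs0 hk.aestronglyMeasurable.aemeasurable
  have hhAE : AEMeasurable (fun x => |h x| ^ r) (volume.restrict (Ioi 0)) := by
    have hhA : AEMeasurable (fun x => |h x| ^ r * K0 (β * x)) (volume.restrict (Ioi 0)) :=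
      hh.aestronglyMeasurable.aemeasurable
    have hm : Measurable fun x => hhA.mk _ x * ((LK (β * x)).toReal)⁻¹ := by
      have := LK_measurable
      have := hhA.measurable_mk
      fun_prop
    refine ⟨_, hm, ?_⟩
    filter_upwards [hhA.ae_eq_mk, ae_restrict_mem measurableSet_Ioi] with x hx hx0
    have hβx : 0 < β * x := mul_pos hβ0 (mem_Ioi.mp hx0)
    rw [← hx, LK_eq hβx, ENNReal.toReal_ofReal (K0_nonneg _), mul_assoc,
      mul_inv_cancel₀ (K0_pos hβx).ne', mul_one]
  obtain ⟨hE, hhEm, hhEt, hHue, hhEe⟩ := rep_exists h hr0 hhAE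
  -- powered versions
  set Fu : ℝ → ℝ≥0∞ := fun y => fE y ^ (1/p) with hFudef
  set Gu : ℝ → ℝ≥0∞ := fun y => gE y ^ (1/q) with hGudef
  set Hu : ℝ → ℝ≥0∞ := fun y => hE y ^ (1/r) with hHudef
  set Ku : ℝ → ℝ≥0∞ := fun y => kE y ^ (1/s) with hKudef
  -- norms
  set Jf := ENNReal.ofReal (∫ x in Ioi (0:ℝ), |f x| ^ p) with hJfdef
  set Jg := ENNReal.ofReal (∫ x in Ioi (0:ℝ), |g x| ^ q) with hJgdef
  set Jh := ENNReal.ofReal (∫ x in Ioi (0:ℝ), |h x| ^ r * K0 (β * x)) with hJhdef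
  set Jk := ENNReal.ofReal (∫ x in Ioi (0:ℝ), |k x| ^ s) with hJkdef
  have hJf : ∫⁻ x in Ioi (0:ℝ), fE x = Jf :=
    lint_eq_ofReal hf (fun x => Real.rpow_nonneg (abs_nonneg _) _) hfEe
  have hJg : ∫⁻ x in Ioi (0:ℝ), gE x = Jg :=
    lint_eq_ofReal hg (fun x => Real.rpow_nonneg (abs_nonneg _) _) hgEe
  have hJk : ∫⁻ x in Ioi (0:ℝ), kE x = Jk :=
    lint_eq_ofReal hk (fun x => Real.rpow_nonneg (abs_nonneg _) _) hkEe
  have hJh : ∫⁻ w in Ioi (0:ℝ), hE w * LK (β * w) = Jh := by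
    have hcong : (fun w => hE w * LK (β * w)) =ᵐ[volume.restrict (Ioi 0)]
        fun w => ENNReal.ofReal (|h w| ^ r * K0 (β * w)) := by
      filter_upwards [hhEe, ae_restrict_mem measurableSet_Ioi] with w hw hw0
      rw [hw, LK_eq (mul_pos hβ0 (mem_Ioi.mp hw0)),
        ← ENNReal.ofReal_mul (Real.rpow_nonneg (abs_nonneg _) _)]
    rw [lintegral_congr_ae hcong, ← ofReal_integral_eq_lintegral_ofReal hh
      (Filter.Eventually.of_forall fun x =>
        mul_nonneg (Real.rpow_nonneg (abs_nonneg _) _) (K0_nonneg _))]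
  set C := 1 / (2 * Real.sqrt (2 * Real.pi)) with hCdef
  have hC0 : 0 < C := by
    rw [hCdef]
    have := Real.pi_pos
    positivity
  set IT := ∫⁻ x in Ioi (0:ℝ), ∫⁻ u in Ioi (0:ℝ), ∫⁻ v in Ioi (0:ℝ), ∫⁻ w in Ioi (0:ℝ),
    A13 x u v w * (Fu u * (Gu v * (Hu w * Ku x))) with hITdef
  have hKut : ∀ x, Ku x ≠ ⊤ := fun x =>
    ENNReal.rpow_ne_top_of_nonneg (by positivity) (hkEt x)
  have step1 : ENNReal.ofReal |∫ x in Ioi (0:ℝ), polyconv f g h x * k x|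
      ≤ ENNReal.ofReal C * IT := by
    set T0 : ℝ → ℝ≥0∞ := fun x => ∫⁻ u in Ioi (0:ℝ), ∫⁻ v in Ioi (0:ℝ), ∫⁻ w in Ioi (0:ℝ),
      A13 x u v w * (ENNReal.ofReal |f u| * (ENNReal.ofReal |g v| * ENNReal.ofReal |h w|))
      with hT0
    set T1 : ℝ → ℝ≥0∞ := fun x => ∫⁻ u in Ioi (0:ℝ), ∫⁻ v in Ioi (0:ℝ), ∫⁻ w in Ioi (0:ℝ),
      A13 x u v w * (Fu u * (Gu v * Hu w)) with hT1
    rw [← Real.enorm_eq_ofReal_abs]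
    refine le_trans (enorm_integral_le_lintegral_enorm _) ?_
    have hpoint : ∀ x : ℝ, (‖polyconv f g h x * k x‖₊ : ℝ≥0∞)
        ≤ ENNReal.ofReal C * (T0 x * ENNReal.ofReal |k x|) := by
      intro x
      rw [nnnorm_mul, ENNReal.coe_mul]
      have h1 : (‖polyconv f g h x‖₊ : ℝ≥0∞) ≤ ENNReal.ofReal C * T0 x := by
        unfold polyconv
        rw [nnnorm_mul, ENNReal.coe_mul,
          ennnorm_abs13 (1 / (2 * Real.sqrt (2 * Real.pi))),
          abs_of_nonneg (by rw [← hCdef]; exact hC0.le), ← hCdef]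
        refine mul_le_mul_right ?_ _
        rw [hT0]
        refine le_trans (enorm_integral_le_lintegral_enorm _) (lintegral_mono fun u =>
          le_trans (enorm_integral_le_lintegral_enorm _) (lintegral_mono fun v =>
          le_trans (enorm_integral_le_lintegral_enorm _) (lintegral_mono fun w =>
          le_of_eq ?_)))
        rw [enorm_mul, enorm_mul, enorm_mul, Real.enorm_eq_ofReal_abs, Real.enorm_eq_ofReal_abs,
          Real.enorm_eq_ofReal_abs, Real.enorm_eq_ofReal_abs]
        show ENNReal.ofReal |Phi x u v w| * ENNReal.ofReal |f u| * ENNReal.ofReal |g v|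
            * ENNReal.ofReal |h w| = A13 x u v w * _
        unfold A13
        ring
      calc (‖polyconv f g h x‖₊ : ℝ≥0∞) * ‖k x‖₊
          ≤ ENNReal.ofReal C * T0 x * ‖k x‖₊ := mul_le_mul_left h1 _
        _ = ENNReal.ofReal C * (T0 x * ENNReal.ofReal |k x|) := by
            rw [ennnorm_abs13, mul_assoc]
    refine le_trans (lintegral_mono hpoint) ?_
    rw [lintegral_const_mul' (ENNReal.ofReal C) _ ENNReal.ofReal_ne_top]
    refine mul_le_mul_right (le_of_eq ?_) _
    have hT01 : ∀ x, T0 x = T1 x := by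
      intro x
      rw [hT0, hT1]
      apply lintegral_congr_ae
      filter_upwards [hFue] with u hu
      apply lintegral_congr_ae
      filter_upwards [hGue] with v hv
      apply lintegral_congr_ae
      filter_upwards [hHue] with w hw
      rw [← hu, ← hv, ← hw]
    have e2 : ∀ x, T1 x * Ku x = ∫⁻ u in Ioi (0:ℝ), ∫⁻ v in Ioi (0:ℝ), ∫⁻ w in Ioi (0:ℝ),
        A13 x u v w * (Fu u * (Gu v * (Hu w * Ku x))) := by
      intro x
      rw [hT1, ← lintegral_mul_const' (Ku x) _ (hKut x)]
      apply lintegral_congr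
      intro u
      rw [← lintegral_mul_const' (Ku x) _ (hKut x)]
      apply lintegral_congr
      intro v
      rw [← lintegral_mul_const' (Ku x) _ (hKut x)]
      apply lintegral_congr
      intro w
      ring
    rw [hITdef]
    apply lintegral_congr_ae
    filter_upwards [hKue] with x hx
    rw [hT01 x, ← hx, e2 x]
  have main : IT ≤ 4 * (Jf ^ (1/p) * (Jg ^ (1/q) * (Jh ^ (1/r) * Jk ^ (1/s)))) := by
    have hA4 : Measurable fun z : ℝ × ℝ × ℝ × ℝ => A13 z.1 z.2.1 z.2.2.1 z.2.2.2 := A13_meas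
    have hFum : Measurable Fu := by rw [hFudef]; fun_prop
    have hGum : Measurable Gu := by rw [hGudef]; fun_prop
    have hHum : Measurable Hu := by rw [hHudef]; fun_prop
    have hKum : Measurable Ku := by rw [hKudef]; fun_prop
    have hJh_ne : Jh ≠ ⊤ := ENNReal.ofReal_ne_top
    have hJg_ne : Jg ≠ ⊤ := ENNReal.ofReal_ne_top
    have hJf_ne : Jf ≠ ⊤ := ENNReal.ofReal_ne_top
    set b0 : ℝ × ℝ × ℝ × ℝ → ℝ≥0∞ := fun z =>
      A13 z.1 z.2.1 z.2.2.1 z.2.2.2 * (gE z.2.2.1 * (hE z.2.2.2 * kE z.1)) with hb0def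
    set b1 : ℝ × ℝ × ℝ × ℝ → ℝ≥0∞ := fun z =>
      A13 z.1 z.2.1 z.2.2.1 z.2.2.2 * (fE z.2.1 * (hE z.2.2.2 * kE z.1)) with hb1def
    set b2 : ℝ × ℝ × ℝ × ℝ → ℝ≥0∞ := fun z =>
      A13 z.1 z.2.1 z.2.2.1 z.2.2.2 * (fE z.2.1 * (gE z.2.2.1 * kE z.1)) with hb2def
    set b3 : ℝ × ℝ × ℝ × ℝ → ℝ≥0∞ := fun z =>
      A13 z.1 z.2.1 z.2.2.1 z.2.2.2 * (fE z.2.1 * (gE z.2.2.1 * hE z.2.2.2)) with hb3def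
    set μ4 := (volume.restrict (Ioi (0:ℝ))).prod ((volume.restrict (Ioi (0:ℝ))).prod
      ((volume.restrict (Ioi (0:ℝ))).prod (volume.restrict (Ioi (0:ℝ))))) with hμ4
    have hITeq : IT = ∫⁻ z : ℝ × ℝ × ℝ × ℝ,
        A13 z.1 z.2.1 z.2.2.1 z.2.2.2 * (Fu z.2.1 * (Gu z.2.2.1 * (Hu z.2.2.2 * Ku z.1)))
          ∂μ4 := by
      rw [hITdef, hμ4, prod4_eq (μ := volume.restrict (Ioi (0:ℝ)))
        (fun x u v w => A13 x u v w * (Fu u * (Gu v * (Hu w * Ku x)))) (by fun_prop)]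
    -- pointwise Hölder factorization
    have hpt : ∀ z : ℝ × ℝ × ℝ × ℝ,
        A13 z.1 z.2.1 z.2.2.1 z.2.2.2 * (Fu z.2.1 * (Gu z.2.2.1 * (Hu z.2.2.2 * Ku z.1)))
          = b0 z ^ (1 - 1/p) * b1 z ^ (1 - 1/q) * b2 z ^ (1 - 1/r) * b3 z ^ (1 - 1/s) := by
      intro z
      rw [hb0def, hb1def, hb2def, hb3def, hFudef, hGudef, hHudef, hKudef]
      exact (key_alg hp hq hr hs hsum _ _ _ _ _).symm
    -- four marginal bounds
    have hB0 : ∫⁻ z, b0 z ∂μ4 ≤ 4 * (Jg * (Jh * Jk)) := by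
      rw [hμ4, hb0def, prod4_eq (μ := volume.restrict (Ioi (0:ℝ)))
        (fun x u v w => A13 x u v w * (gE v * (hE w * kE x))) (by fun_prop)]
      have hrot : ∀ x : ℝ, (∫⁻ u in Ioi (0:ℝ), ∫⁻ v in Ioi (0:ℝ), ∫⁻ w in Ioi (0:ℝ),
          A13 x u v w * (gE v * (hE w * kE x)))
          = ∫⁻ v in Ioi (0:ℝ), ∫⁻ w in Ioi (0:ℝ), ∫⁻ u in Ioi (0:ℝ),
            A13 x u v w * (gE v * (hE w * kE x)) := fun x =>
        rot3 (fun u v w => A13 x u v w * (gE v * (hE w * kE x))) (by fun_prop)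
      rw [lintegral_congr hrot]
      have hinner : ∀ x v w : ℝ, (∫⁻ u in Ioi (0:ℝ), A13 x u v w * (gE v * (hE w * kE x)))
          = (∫⁻ u in Ioi (0:ℝ), A13 x u v w) * (gE v * (hE w * kE x)) := fun x v w =>
        lintegral_mul_const' _ _ (ENNReal.mul_ne_top (hgEt v)
          (ENNReal.mul_ne_top (hhEt w) (hkEt x)))
      have hwlev : ∀ x v : ℝ, (∫⁻ w in Ioi (0:ℝ), ∫⁻ u in Ioi (0:ℝ),
          A13 x u v w * (gE v * (hE w * kE x))) ≤ (gE v * kE x) * (4 * Jh) := by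
        intro x v
        have hmono : (∫⁻ w in Ioi (0:ℝ), ∫⁻ u in Ioi (0:ℝ),
            A13 x u v w * (gE v * (hE w * kE x)))
            ≤ ∫⁻ w in Ioi (0:ℝ), (gE v * kE x) * (4 * (hE w * LK (β * w))) := by
          apply lintegral_mono_ae
          filter_upwards [ae_restrict_mem measurableSet_Ioi] with w hw
          rw [hinner x v w]
          calc (∫⁻ u in Ioi (0:ℝ), A13 x u v w) * (gE v * (hE w * kE x))
              ≤ (4 * LK (β * w)) * (gE v * (hE w * kE x)) :=
                mul_le_mul_left (le_trans (marg_u x v w)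
                  (mul_le_mul_right (LK_mono hβ0 hβ1 (le_of_lt (mem_Ioi.mp hw))) 4)) _
            _ = (gE v * kE x) * (4 * (hE w * LK (β * w))) := by ring
        refine le_trans hmono (le_of_eq ?_)
        rw [lintegral_const_mul' _ _ (ENNReal.mul_ne_top (hgEt v) (hkEt x)),
          lintegral_const_mul' 4 _ (by norm_num), hJh]
      refine le_trans (lintegral_mono fun x => lintegral_mono fun v => hwlev x v)
        (le_of_eq ?_)
      have hvlev : ∀ x : ℝ, (∫⁻ v in Ioi (0:ℝ), (gE v * kE x) * (4 * Jh))
          = kE x * (Jg * (4 * Jh)) := by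
        intro x
        have : ∀ v : ℝ, (gE v * kE x) * (4 * Jh) = gE v * (kE x * (4 * Jh)) :=
          fun v => by ring
        rw [lintegral_congr this, lintegral_mul_const' _ _
          (ENNReal.mul_ne_top (hkEt x) (ENNReal.mul_ne_top (by norm_num) hJh_ne)), hJg]
        ring
      rw [lintegral_congr hvlev, lintegral_mul_const' _ _
        (ENNReal.mul_ne_top hJg_ne (ENNReal.mul_ne_top (by norm_num) hJh_ne)), hJk]
      ring
    have hB1 : ∫⁻ z, b1 z ∂μ4 ≤ 4 * (Jf * (Jh * Jk)) := by
      rw [hμ4, hb1def, prod4_eq (μ := volume.restrict (Ioi (0:ℝ)))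
        (fun x u v w => A13 x u v w * (fE u * (hE w * kE x))) (by fun_prop)]
      have hrot : ∀ x u : ℝ, (∫⁻ v in Ioi (0:ℝ), ∫⁻ w in Ioi (0:ℝ),
          A13 x u v w * (fE u * (hE w * kE x)))
          = ∫⁻ w in Ioi (0:ℝ), ∫⁻ v in Ioi (0:ℝ),
            A13 x u v w * (fE u * (hE w * kE x)) := fun x u =>
        swap2 (fun v w => A13 x u v w * (fE u * (hE w * kE x))) (by fun_prop)
      rw [lintegral_congr fun x => lintegral_congr fun u => hrot x u]
      have hinner : ∀ x u w : ℝ, (∫⁻ v in Ioi (0:ℝ), A13 x u v w * (fE u * (hE w * kE x)))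
          = (∫⁻ v in Ioi (0:ℝ), A13 x u v w) * (fE u * (hE w * kE x)) := fun x u w =>
        lintegral_mul_const' _ _ (ENNReal.mul_ne_top (hfEt u)
          (ENNReal.mul_ne_top (hhEt w) (hkEt x)))
      have hwlev : ∀ x u : ℝ, (∫⁻ w in Ioi (0:ℝ), ∫⁻ v in Ioi (0:ℝ),
          A13 x u v w * (fE u * (hE w * kE x))) ≤ (fE u * kE x) * (4 * Jh) := by
        intro x u
        have hmono : (∫⁻ w in Ioi (0:ℝ), ∫⁻ v in Ioi (0:ℝ),
            A13 x u v w * (fE u * (hE w * kE x)))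
            ≤ ∫⁻ w in Ioi (0:ℝ), (fE u * kE x) * (4 * (hE w * LK (β * w))) := by
          apply lintegral_mono_ae
          filter_upwards [ae_restrict_mem measurableSet_Ioi] with w hw
          rw [hinner x u w]
          calc (∫⁻ v in Ioi (0:ℝ), A13 x u v w) * (fE u * (hE w * kE x))
              ≤ (4 * LK (β * w)) * (fE u * (hE w * kE x)) :=
                mul_le_mul_left (le_trans (marg_v x u w)
                  (mul_le_mul_right (LK_mono hβ0 hβ1 (le_of_lt (mem_Ioi.mp hw))) 4)) _
            _ = (fE u * kE x) * (4 * (hE w * LK (β * w))) := by ring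
        refine le_trans hmono (le_of_eq ?_)
        rw [lintegral_const_mul' _ _ (ENNReal.mul_ne_top (hfEt u) (hkEt x)),
          lintegral_const_mul' 4 _ (by norm_num), hJh]
      refine le_trans (lintegral_mono fun x => lintegral_mono fun u => hwlev x u)
        (le_of_eq ?_)
      have hulev : ∀ x : ℝ, (∫⁻ u in Ioi (0:ℝ), (fE u * kE x) * (4 * Jh))
          = kE x * (Jf * (4 * Jh)) := by
        intro x
        have : ∀ u : ℝ, (fE u * kE x) * (4 * Jh) = fE u * (kE x * (4 * Jh)) :=
          fun u => by ring
        rw [lintegral_congr this, lintegral_mul_const' _ _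
          (ENNReal.mul_ne_top (hkEt x) (ENNReal.mul_ne_top (by norm_num) hJh_ne)), hJf]
        ring
      rw [lintegral_congr hulev, lintegral_mul_const' _ _
        (ENNReal.mul_ne_top hJf_ne (ENNReal.mul_ne_top (by norm_num) hJh_ne)), hJk]
      ring
    have hB2 : ∫⁻ z, b2 z ∂μ4 ≤ 4 * (Jf * (Jg * Jk)) := by
      rw [hμ4, hb2def, prod4_eq (μ := volume.restrict (Ioi (0:ℝ)))
        (fun x u v w => A13 x u v w * (fE u * (gE v * kE x))) (by fun_prop)]
      have hinner : ∀ x u v : ℝ, (∫⁻ w in Ioi (0:ℝ), A13 x u v w * (fE u * (gE v * kE x)))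
          ≤ 4 * (fE u * (gE v * kE x)) := by
        intro x u v
        rw [lintegral_mul_const' _ _ (ENNReal.mul_ne_top (hfEt u)
          (ENNReal.mul_ne_top (hgEt v) (hkEt x)))]
        exact mul_le_mul_left (marg_w x u v) _
      refine le_trans (lintegral_mono fun x => lintegral_mono fun u =>
        lintegral_mono fun v => hinner x u v) (le_of_eq ?_)
      have hvlev : ∀ x u : ℝ, (∫⁻ v in Ioi (0:ℝ), 4 * (fE u * (gE v * kE x)))
          = Jg * (4 * (fE u * kE x)) := by
        intro x u
        have : ∀ v : ℝ, 4 * (fE u * (gE v * kE x)) = gE v * (4 * (fE u * kE x)) :=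
          fun v => by ring
        rw [lintegral_congr this, lintegral_mul_const' _ _ (ENNReal.mul_ne_top (by norm_num)
          (ENNReal.mul_ne_top (hfEt u) (hkEt x))), hJg]
      rw [lintegral_congr fun x => lintegral_congr fun u => hvlev x u]
      have hulev : ∀ x : ℝ, (∫⁻ u in Ioi (0:ℝ), Jg * (4 * (fE u * kE x)))
          = Jf * (Jg * (4 * kE x)) := by
        intro x
        have : ∀ u : ℝ, Jg * (4 * (fE u * kE x)) = fE u * (Jg * (4 * kE x)) :=
          fun u => by ring
        rw [lintegral_congr this, lintegral_mul_const' _ _ (ENNReal.mul_ne_top hJg_ne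
          (ENNReal.mul_ne_top (by norm_num) (hkEt x))), hJf]
      rw [lintegral_congr hulev]
      have : ∀ x : ℝ, Jf * (Jg * (4 * kE x)) = kE x * (Jf * (Jg * 4)) := fun x => by ring
      rw [lintegral_congr this, lintegral_mul_const' _ _ (ENNReal.mul_ne_top hJf_ne
        (ENNReal.mul_ne_top hJg_ne (by norm_num))), hJk]
      ring
    have hB3 : ∫⁻ z, b3 z ∂μ4 ≤ 4 * (Jf * (Jg * Jh)) := by
      rw [hμ4, hb3def, prod4_eq (μ := volume.restrict (Ioi (0:ℝ)))
        (fun x u v w => A13 x u v w * (fE u * (gE v * hE w))) (by fun_prop),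
        rot4 (fun x u v w => A13 x u v w * (fE u * (gE v * hE w))) (by fun_prop)]
      have hinner : ∀ x u v w : ℝ, True := fun _ _ _ _ => trivial
      have hxin : ∀ u v w : ℝ, (∫⁻ x in Ioi (0:ℝ), A13 x u v w * (fE u * (gE v * hE w)))
          = (∫⁻ x in Ioi (0:ℝ), A13 x u v w) * (fE u * (gE v * hE w)) := fun u v w =>
        lintegral_mul_const' _ _ (ENNReal.mul_ne_top (hfEt u)
          (ENNReal.mul_ne_top (hgEt v) (hhEt w)))
      have hwlev : ∀ u v : ℝ, (∫⁻ w in Ioi (0:ℝ), ∫⁻ x in Ioi (0:ℝ),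
          A13 x u v w * (fE u * (gE v * hE w))) ≤ (fE u * gE v) * (4 * Jh) := by
        intro u v
        have hmono : (∫⁻ w in Ioi (0:ℝ), ∫⁻ x in Ioi (0:ℝ),
            A13 x u v w * (fE u * (gE v * hE w)))
            ≤ ∫⁻ w in Ioi (0:ℝ), (fE u * gE v) * (4 * (hE w * LK (β * w))) := by
          apply lintegral_mono_ae
          filter_upwards [ae_restrict_mem measurableSet_Ioi] with w hw
          rw [hxin u v w]
          calc (∫⁻ x in Ioi (0:ℝ), A13 x u v w) * (fE u * (gE v * hE w))
              ≤ (4 * LK (β * w)) * (fE u * (gE v * hE w)) :=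
                mul_le_mul_left (le_trans (marg_x u v w)
                  (mul_le_mul_right (LK_mono hβ0 hβ1 (le_of_lt (mem_Ioi.mp hw))) 4)) _
            _ = (fE u * gE v) * (4 * (hE w * LK (β * w))) := by ring
        refine le_trans hmono (le_of_eq ?_)
        rw [lintegral_const_mul' _ _ (ENNReal.mul_ne_top (hfEt u) (hgEt v)),
          lintegral_const_mul' 4 _ (by norm_num), hJh]
      refine le_trans (lintegral_mono fun u => lintegral_mono fun v => hwlev u v)
        (le_of_eq ?_)
      have hvlev : ∀ u : ℝ, (∫⁻ v in Ioi (0:ℝ), (fE u * gE v) * (4 * Jh))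
          = fE u * (Jg * (4 * Jh)) := by
        intro u
        have : ∀ v : ℝ, (fE u * gE v) * (4 * Jh) = gE v * (fE u * (4 * Jh)) :=
          fun v => by ring
        rw [lintegral_congr this, lintegral_mul_const' _ _
          (ENNReal.mul_ne_top (hfEt u) (ENNReal.mul_ne_top (by norm_num) hJh_ne)), hJg]
        ring
      rw [lintegral_congr hvlev, lintegral_mul_const' _ _
        (ENNReal.mul_ne_top hJg_ne (ENNReal.mul_ne_top (by norm_num) hJh_ne)), hJf]
      ring
    -- Hölder inequality
    have hc₂' : (0:ℝ) ≤ 1 - 1/r := by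
      have : 1/r ≤ 1 := by rw [div_le_one hr0]; linarith
      linarith
    have holder : ∫⁻ z, b0 z ^ (1 - 1/p) * b1 z ^ (1 - 1/q) * b2 z ^ (1 - 1/r)
        * b3 z ^ (1 - 1/s) ∂μ4
        ≤ (∫⁻ z, b0 z ∂μ4) ^ (1 - 1/p) * (∫⁻ z, b1 z ∂μ4) ^ (1 - 1/q)
          * (∫⁻ z, b2 z ∂μ4) ^ (1 - 1/r) * (∫⁻ z, b3 z ∂μ4) ^ (1 - 1/s) := by
      have hb0m : Measurable b0 := by rw [hb0def]; fun_prop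
      have hb1m : Measurable b1 := by rw [hb1def]; fun_prop
      have hb2m : Measurable b2 := by rw [hb2def]; fun_prop
      have hb3m : Measurable b3 := by rw [hb3def]; fun_prop
      have hp1 : 1/p ≤ 1 := by rw [div_le_one hp0]; linarith
      have hq1 : 1/q ≤ 1 := by rw [div_le_one hq0]; linarith
      have hr1 : 1/r ≤ 1 := by rw [div_le_one hr0]; linarith
      have hs1 : 1/s ≤ 1 := by rw [div_le_one hs0]; linarith
      have H := ENNReal.lintegral_prod_norm_pow_le (μ := μ4) Finset.univ
        (f := ![b0, b1, b2, b3])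
        (fun i _ => by
          fin_cases i <;> simp <;>
            first
            | exact hb0m.aemeasurable
            | exact hb1m.aemeasurable
            | exact hb2m.aemeasurable
            | exact hb3m.aemeasurable)
        (p := ![1 - 1/p, 1 - 1/q, 1 - 1/r, 1 - 1/s])
        (by
          rw [Fin.sum_univ_four]
          simp only [Matrix.cons_val_zero, Matrix.cons_val_one, Matrix.head_cons,
            Matrix.cons_val_two, Matrix.tail_cons, Matrix.cons_val_three]
          linarith)
        (fun i _ => by
          have hp1' : p⁻¹ ≤ 1 := by rw [← one_div]; exact hp1
          have hq1' : q⁻¹ ≤ 1 := by rw [← one_div]; exact hq1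
          have hr1' : r⁻¹ ≤ 1 := by rw [← one_div]; exact hr1
          have hs1' : s⁻¹ ≤ 1 := by rw [← one_div]; exact hs1
          fin_cases i <;> simp <;> linarith)
      simp only [Fin.prod_univ_four, Fin.isValue, Matrix.cons_val_zero, Matrix.cons_val_one,
        Matrix.head_cons, Matrix.cons_val_two, Matrix.tail_cons, Matrix.cons_val_three] at H
      exact H
    calc IT = ∫⁻ z, b0 z ^ (1 - 1/p) * b1 z ^ (1 - 1/q) * b2 z ^ (1 - 1/r)
          * b3 z ^ (1 - 1/s) ∂μ4 := by rw [hITeq]; exact lintegral_congr hpt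
      _ ≤ (∫⁻ z, b0 z ∂μ4) ^ (1 - 1/p) * (∫⁻ z, b1 z ∂μ4) ^ (1 - 1/q)
          * (∫⁻ z, b2 z ∂μ4) ^ (1 - 1/r) * (∫⁻ z, b3 z ∂μ4) ^ (1 - 1/s) := holder
      _ ≤ (4 * (Jg * (Jh * Jk))) ^ (1 - 1/p) * (4 * (Jf * (Jh * Jk))) ^ (1 - 1/q)
          * (4 * (Jf * (Jg * Jk))) ^ (1 - 1/r) * (4 * (Jf * (Jg * Jh))) ^ (1 - 1/s) := by
        have e0 : (0:ℝ) ≤ 1 - 1/p := by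
          have : 1/p ≤ 1 := by rw [div_le_one hp0]; linarith
          linarith
        have e1 : (0:ℝ) ≤ 1 - 1/q := by
          have : 1/q ≤ 1 := by rw [div_le_one hq0]; linarith
          linarith
        have e3 : (0:ℝ) ≤ 1 - 1/s := by
          have : 1/s ≤ 1 := by rw [div_le_one hs0]; linarith
          linarith
        exact mul_le_mul' (mul_le_mul' (mul_le_mul' (ENNReal.rpow_le_rpow hB0 e0)
          (ENNReal.rpow_le_rpow hB1 e1)) (ENNReal.rpow_le_rpow hB2 hc₂'))
          (ENNReal.rpow_le_rpow hB3 e3)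
      _ = 4 * (Jf ^ (1/p) * (Jg ^ (1/q) * (Jh ^ (1/r) * Jk ^ (1/s)))) :=
        key_alg hp hq hr hs hsum 4 Jf Jg Jh Jk
  -- final assembly
  have hXne : 4 * (Jf ^ (1/p) * (Jg ^ (1/q) * (Jh ^ (1/r) * Jk ^ (1/s)))) ≠ ⊤ := by
    refine ENNReal.mul_ne_top (by norm_num) ?_
    refine ENNReal.mul_ne_top (ENNReal.rpow_ne_top_of_nonneg (by positivity)
      ENNReal.ofReal_ne_top) ?_
    refine ENNReal.mul_ne_top (ENNReal.rpow_ne_top_of_nonneg (by positivity)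
      ENNReal.ofReal_ne_top) ?_
    exact ENNReal.mul_ne_top (ENNReal.rpow_ne_top_of_nonneg (by positivity)
      ENNReal.ofReal_ne_top) (ENNReal.rpow_ne_top_of_nonneg (by positivity)
      ENNReal.ofReal_ne_top)
  have hfin : ENNReal.ofReal C * (4 * (Jf ^ (1/p) * (Jg ^ (1/q) * (Jh ^ (1/r) * Jk ^ (1/s)))))
      ≠ ⊤ := ENNReal.mul_ne_top ENNReal.ofReal_ne_top hXne
  have hle := le_trans step1 (mul_le_mul_right main (ENNReal.ofReal C))
  have habs : |∫ x in Ioi (0:ℝ), polyconv f g h x * k x|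
      = (ENNReal.ofReal |∫ x in Ioi (0:ℝ), polyconv f g h x * k x|).toReal :=
    (ENNReal.toReal_ofReal (abs_nonneg _)).symm
  rw [habs]
  refine le_trans (ENNReal.toReal_mono hfin hle) ?_
  -- compute toReal
  have hfint : (0:ℝ) ≤ ∫ x in Ioi (0:ℝ), |f x| ^ p :=
    integral_nonneg fun x => Real.rpow_nonneg (abs_nonneg _) _
  have hgint : (0:ℝ) ≤ ∫ x in Ioi (0:ℝ), |g x| ^ q :=
    integral_nonneg fun x => Real.rpow_nonneg (abs_nonneg _) _
  have hhint : (0:ℝ) ≤ ∫ x in Ioi (0:ℝ), |h x| ^ r * K0 (β * x) :=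
    integral_nonneg fun x => mul_nonneg (Real.rpow_nonneg (abs_nonneg _) _) (K0_nonneg _)
  have hkint : (0:ℝ) ≤ ∫ x in Ioi (0:ℝ), |k x| ^ s :=
    integral_nonneg fun x => Real.rpow_nonneg (abs_nonneg _) _
  have htr : ∀ (a : ℝ) (ha : 0 ≤ a) (e : ℝ), ((ENNReal.ofReal a) ^ e).toReal = a ^ e := by
    intro a ha e
    rw [← ENNReal.toReal_rpow, ENNReal.toReal_ofReal ha]
  rw [ENNReal.toReal_mul, ENNReal.toReal_mul, ENNReal.toReal_mul, ENNReal.toReal_mul,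
    ENNReal.toReal_mul, ENNReal.toReal_ofReal hC0.le, hJfdef, hJgdef, hJhdef, hJkdef,
    htr _ hfint, htr _ hgint, htr _ hhint, htr _ hkint]
  have h4 : ((4:ℝ≥0∞)).toReal = 4 := by norm_num
  rw [h4, hcosh]
  have hCeq : C * 4 = Real.sqrt (2 / Real.pi) := by
    have hπ : 0 < Real.pi := Real.pi_pos
    have hs2π : 0 < Real.sqrt (2 * Real.pi) := Real.sqrt_pos.2 (by linarith)
    have hmul : Real.sqrt (2 / Real.pi) * Real.sqrt (2 * Real.pi) = 2 := by
      rw [← Real.sqrt_mul (by positivity) (2 * Real.pi)]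
      rw [show 2 / Real.pi * (2 * Real.pi) = 4 by field_simp; ring]
      rw [show (4:ℝ) = 2 ^ 2 by norm_num, Real.sqrt_sq (by norm_num)]
    have e1 : Real.sqrt (2 / Real.pi) = 2 / Real.sqrt (2 * Real.pi) := by
      rw [eq_div_iff hs2π.ne']; exact hmul
    rw [hCdef, e1]
    field_simp
    ring
  rw [show (1:ℝ)/1 = 1 by norm_num, Real.one_rpow]
  apply le_of_eq
  rw [← hCeq]
  ring
end
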